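/- arXiv:2306.05155 — 4 statements merged into one kernel-verified Lean document; each statement's English description precedes it below -/
import Mathlib

section
/- Let T be a tree of order n with diameter at least 4, and let T₁ be obtained from T by a proper generalized tree shift. Then the distance spectral radius of the complement of T₁ is strictly greater than the distance spectral radius of the complement of T: λ₁(T̄₁) > λ₁(T̄). -/
open SimpleGraph Matrix BigOperators Finset

noncomputable section

/-- Distance matrix of a graph on `Fin n`, with real entries. -/
def distM {n : ℕ} (G : SimpleGraph (Fin n)) : Matrix (Fin n) (Fin n) ℝ :=
  fun i j => (G.dist i j : ℝ)

/-- Transmission of a vertex: sum of distances to all vertices. -/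
def transm {n : ℕ} (G : SimpleGraph (Fin n)) (i : Fin n) : ℝ :=
  ∑ j, (G.dist i j : ℝ)

/-- Diagonal matrix of transmissions. -/
def trM {n : ℕ} (G : SimpleGraph (Fin n)) : Matrix (Fin n) (Fin n) ℝ :=
  Matrix.diagonal (transm G)

/-- Distance signless Laplacian. -/
def DQ {n : ℕ} (G : SimpleGraph (Fin n)) : Matrix (Fin n) (Fin n) ℝ :=
  trM G + distM G

/-- The `D_α` matrix. -/
def Dalpha {n : ℕ} (G : SimpleGraph (Fin n)) (α : ℝ) : Matrix (Fin n) (Fin n) ℝ :=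
  α • trM G + (1 - α) • distM G

/-- Largest eigenvalue of a real matrix. -/
def lam1 {n : ℕ} (M : Matrix (Fin n) (Fin n) ℝ) : ℝ :=
  sSup {t : ℝ | ∃ v : Fin n → ℝ, v ≠ 0 ∧ M.mulVec v = t • v}

/-- Degree of a vertex. -/
def deg {n : ℕ} (G : SimpleGraph (Fin n)) (x : Fin n) : ℕ :=
  (G.neighborSet x).ncard

/-- Number of pendant (degree-one) vertices. -/
def pendants {n : ℕ} (G : SimpleGraph (Fin n)) : ℕ :=
  {x : Fin n | deg G x = 1}.ncard

/-- Diameter: supremum of pairwise distances. -/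
def gdiam {n : ℕ} (G : SimpleGraph (Fin n)) : ℕ :=
  sSup {d : ℕ | ∃ x y : Fin n, G.dist x y = d}

/-- The graph obtained by moving all edges at `v` except `vw` to `u`. -/
def shift {n : ℕ} (T : SimpleGraph (Fin n)) (u v w : Fin n) : SimpleGraph (Fin n) :=
  SimpleGraph.fromRel (fun a b =>
    (T.Adj a b ∧ ((a ≠ v ∧ b ≠ v) ∨ (a = v ∧ b = w) ∨ (b = v ∧ a = w))) ∨
    (a = u ∧ T.Adj v b ∧ b ≠ w))

/-- `T₁` is obtained from `T` by a proper generalized tree shift. -/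
def IsProperGTS {n : ℕ} (T T₁ : SimpleGraph (Fin n)) : Prop :=
  ∃ (u v w : Fin n) (p : T.Walk u v), u ≠ v ∧ p.IsPath ∧
    T.Adj w v ∧ w ∈ p.support ∧
    (∀ x ∈ p.support, x ≠ u → x ≠ v → deg T x = 2) ∧
    deg T u ≠ 1 ∧ deg T v ≠ 1 ∧ T₁ = shift T u v w

/-- The Kelmans transformation at vertices `u`, `v`. -/
def kelmans {n : ℕ} (T : SimpleGraph (Fin n)) (u v : Fin n) : SimpleGraph (Fin n) :=
  SimpleGraph.fromRel (fun a b =>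
    (T.Adj a b ∧ ¬(a = v ∧ ¬T.Adj u b ∧ b ≠ u) ∧ ¬(b = v ∧ ¬T.Adj u a ∧ a ≠ u)) ∨
    (a = u ∧ T.Adj v b ∧ ¬T.Adj u b ∧ b ≠ u))

/-- Collapse the edge `ab` (identifying into `a`) and reuse `b` as a new pendant at `a`. -/
def collapseAddPendant {n : ℕ} (T : SimpleGraph (Fin n)) (a b : Fin n) : SimpleGraph (Fin n) :=
  SimpleGraph.fromRel (fun x y =>
    (x ≠ a ∧ x ≠ b ∧ y ≠ a ∧ y ≠ b ∧ T.Adj x y) ∨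
    (x = a ∧ y ≠ a ∧ y ≠ b ∧ (T.Adj a y ∨ T.Adj b y)) ∨
    (x = a ∧ y = b))

/-- The star `K_{1,n-1}` with centre `0`. -/
def starG (n : ℕ) [NeZero n] : SimpleGraph (Fin n) :=
  SimpleGraph.fromRel (fun a b => a = 0 ∨ b = 0)

/-- Irreducibility of a nonnegative matrix. -/
def IrreducibleM {n : ℕ} (M : Matrix (Fin n) (Fin n) ℝ) : Prop :=
  ∀ i j : Fin n, i ≠ j → ∃ k : ℕ, 0 < (M ^ k) i j


/-- `T` is a star: some centre is adjacent to exactly the other vertices, and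
there are no other edges. -/
def IsStar {n : ℕ} (T : SimpleGraph (Fin n)) : Prop :=
  ∃ c : Fin n, ∀ a b : Fin n, T.Adj a b ↔ (a ≠ b ∧ (a = c ∨ b = c))

/-- The all-ones matrix. -/
def Jmat (n : ℕ) : Matrix (Fin n) (Fin n) ℝ := Matrix.of fun _ _ => 1


set_option maxHeartbeats 1600000

namespace GTSaux
variable {n : ℕ}
def quadF (M : Matrix (Fin n) (Fin n) ℝ) (x : Fin n → ℝ) : ℝ := x ⬝ᵥ M.mulVec x
def sph (n : ℕ) : Set (Fin n → ℝ) := {x | ∑ i, x i ^ 2 = 1}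

lemma quadF_eq (M : Matrix (Fin n) (Fin n) ℝ) (x : Fin n → ℝ) :
    quadF M x = ∑ i, ∑ j, M i j * x i * x j := by
  simp only [quadF, dotProduct, mulVec, dotProduct, Finset.mul_sum]
  exact Finset.sum_congr rfl fun i _ => Finset.sum_congr rfl fun j _ => by ring


lemma isCompact_sph : IsCompact (sph n) := by
  have hclosed : IsClosed (sph n) := by
    have : sph n = (fun x : Fin n → ℝ => ∑ i, x i ^ 2) ⁻¹' {1} := rfl
    rw [this]
    exact IsClosed.preimage (by fun_prop) isClosed_singleton
  have hbdd : Bornology.IsBounded (sph n) := by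
    apply Bornology.IsBounded.subset (Metric.isBounded_closedBall (x := (0 : Fin n → ℝ)) (r := 1))
    intro x hx
    simp only [Metric.mem_closedBall, dist_zero_right]
    rw [pi_norm_le_iff_of_nonneg (by norm_num)]
    intro i
    rw [Real.norm_eq_abs, abs_le]
    have h1 : x i ^ 2 ≤ 1 := by
      rw [← hx]
      exact Finset.single_le_sum (f := fun j => x j ^ 2) (fun j _ => sq_nonneg _) (Finset.mem_univ i)
    constructor <;> nlinarith
  exact Metric.isCompact_of_isClosed_isBounded hclosed hbdd


lemma sph_nonempty (hn : 0 < n) : (sph n).Nonempty := by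
  refine ⟨fun j => if j = ⟨0, hn⟩ then 1 else 0, ?_⟩
  have : ∀ j : Fin n, (if j = ⟨0, hn⟩ then (1:ℝ) else 0) ^ 2 = if j = ⟨0, hn⟩ then 1 else 0 := by
    intro j; by_cases h : j = ⟨0, hn⟩ <;> simp [h]
  simp only [sph, Set.mem_setOf_eq, this, Finset.sum_ite_eq', Finset.mem_univ, if_true]


lemma exists_max (hn : 0 < n) (M : Matrix (Fin n) (Fin n) ℝ) :
    ∃ x ∈ sph n, ∀ z ∈ sph n, quadF M z ≤ quadF M x := by
  have hc : ContinuousOn (quadF M) (sph n) := by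
    apply Continuous.continuousOn
    have h : quadF M = fun x => ∑ i, ∑ j, M i j * x i * x j := funext (quadF_eq M)
    rw [h]; fun_prop
  obtain ⟨x, hx, hmax⟩ := isCompact_sph.exists_isMaxOn (sph_nonempty hn) hc
  exact ⟨x, hx, fun z hz => hmax hz⟩


lemma dot_symm (M : Matrix (Fin n) (Fin n) ℝ) (hM : Mᵀ = M) (a b : Fin n → ℝ) :
    a ⬝ᵥ M.mulVec b = b ⬝ᵥ M.mulVec a := by
  nth_rewrite 1 [Matrix.dotProduct_mulVec]
  nth_rewrite 1 [← hM]
  rw [Matrix.vecMul_transpose, dotProduct_comm]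
lemma quadF_smul (M : Matrix (Fin n) (Fin n) ℝ) (c : ℝ) (x : Fin n → ℝ) :
    quadF M (c • x) = c ^ 2 * quadF M x := by
  simp [quadF, Matrix.mulVec_smul, dotProduct_smul, smul_dotProduct]
  ring
lemma quadF_add (M : Matrix (Fin n) (Fin n) ℝ) (hM : Mᵀ = M) (a b : Fin n → ℝ) :
    quadF M (a + b) = quadF M a + quadF M b + 2 * (a ⬝ᵥ M.mulVec b) := by
  simp [quadF, Matrix.mulVec_add, dotProduct_add, add_dotProduct]
  rw [dot_symm M hM b a]
  ring

lemma dot_eq_sumsq (x : Fin n → ℝ) : x ⬝ᵥ x = ∑ i, x i ^ 2 := by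
  simp [dotProduct, sq]

lemma sumsq_pos_of_ne_zero {x : Fin n → ℝ} (hx : x ≠ 0) : 0 < ∑ i, x i ^ 2 := by
  rcases Function.ne_iff.mp hx with ⟨i, hi⟩
  have h1 : (0:ℝ) < x i ^ 2 := lt_of_le_of_ne (sq_nonneg _) (Ne.symm (pow_ne_zero 2 hi))
  calc (0:ℝ) < x i ^ 2 := h1
    _ ≤ ∑ j, x j ^ 2 :=
      Finset.single_le_sum (f := fun j => x j ^ 2) (fun j _ => sq_nonneg _) (Finset.mem_univ i)

lemma eig_of_max (M : Matrix (Fin n) (Fin n) ℝ) (hM : Mᵀ = M) {x : Fin n → ℝ}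
    (hx : x ∈ sph n) (hmax : ∀ z ∈ sph n, quadF M z ≤ quadF M x) :
    M.mulVec x = (quadF M x) • x := by
  set l := quadF M x with hl
  set r : Fin n → ℝ := M.mulVec x - l • x with hrdef
  by_contra hne
  have hrne : r ≠ 0 := by
    intro h0
    exact hne (by rw [← sub_eq_zero]; exact h0)
  set ρ := ∑ i, r i ^ 2 with hρdef
  have hρ : 0 < ρ := sumsq_pos_of_ne_zero hrne
  have hsph : ∑ i, x i ^ 2 = 1 := hx
  have hxx : x ⬝ᵥ x = 1 := by rw [dot_eq_sumsq]; exact hsph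
  have hxr : x ⬝ᵥ r = 0 := by
    rw [hrdef, dotProduct_sub, dotProduct_smul]
    simp only [smul_eq_mul, hxx, mul_one]
    simp [quadF] at hl
    rw [← hl]; ring
  have hrx : r ⬝ᵥ x = 0 := by rw [dotProduct_comm]; exact hxr
  have hrMx : r ⬝ᵥ M.mulVec x = ρ := by
    have : M.mulVec x = r + l • x := by rw [hrdef]; abel
    rw [this, dotProduct_add, dotProduct_smul, hrx, dot_eq_sumsq]
    simp [hρdef]
  have hxMr : x ⬝ᵥ M.mulVec r = ρ := by rw [dot_symm M hM]; exact hrMx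
  set q := quadF M r with hq
  set c := l * ρ - q with hc
  set t := ρ / (1 + |c|) with ht
  have habs : (0:ℝ) ≤ |c| := abs_nonneg _
  have ht0 : 0 < t := by positivity
  have htc : t * (1 + |c|) = ρ := by
    rw [ht]; field_simp
  -- the perturbed vector
  set z' : Fin n → ℝ := x + t • r with hz'
  have hqz' : quadF M z' = l + t ^ 2 * q + 2 * t * ρ := by
    rw [hz', quadF_add M hM, quadF_smul]
    rw [Matrix.mulVec_smul, dotProduct_smul]
    simp only [smul_eq_mul, hxMr]
    rw [← hl, ← hq]; ring
  have hnz' : ∑ i, z' i ^ 2 = 1 + t ^ 2 * ρ := by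
    rw [← dot_eq_sumsq, hz', dotProduct_add, add_dotProduct,
      add_dotProduct, dotProduct_smul, smul_dotProduct,
      smul_dotProduct, dotProduct_smul]
    simp only [smul_eq_mul, hxx, hxr, hrx, dot_eq_sumsq r, ← hρdef]
    ring
  set s := 1 + t ^ 2 * ρ with hs
  have hs0 : 0 < s := by positivity
  set z : Fin n → ℝ := (Real.sqrt s)⁻¹ • z' with hz
  have hzsph : z ∈ sph n := by
    have : ∑ i, z i ^ 2 = ((Real.sqrt s)⁻¹) ^ 2 * ∑ i, z' i ^ 2 := by
      rw [hz]; simp [Finset.mul_sum, mul_pow]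
    simp only [sph, Set.mem_setOf_eq, this, hnz', ← hs]
    rw [inv_pow, Real.sq_sqrt hs0.le]
    field_simp
  have hqz : quadF M z = s⁻¹ * (l + t ^ 2 * q + 2 * t * ρ) := by
    rw [hz, quadF_smul, hqz']
    rw [inv_pow, Real.sq_sqrt hs0.le]
  have hle : quadF M z ≤ l := hmax z hzsph
  rw [hqz] at hle
  have hkey : l + t ^ 2 * q + 2 * t * ρ ≤ l * s := by
    calc l + t ^ 2 * q + 2 * t * ρ = s * (s⁻¹ * (l + t ^ 2 * q + 2 * t * ρ)) := by
          field_simp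
      _ ≤ s * l := by exact mul_le_mul_of_nonneg_left hle hs0.le
      _ = l * s := by ring
  -- l * s = l + l t² ρ, so 2 t ρ ≤ t² (l ρ - q) = t² c
  have hkey' : l + t ^ 2 * q + 2 * t * ρ ≤ l * (1 + t ^ 2 * ρ) := by rw [← hs]; exact hkey
  have hc' : t ^ 2 * c = t ^ 2 * (l * ρ) - t ^ 2 * q := by rw [hc]; ring
  have h2 : 2 * t * ρ ≤ t ^ 2 * c := by nlinarith [hkey']
  have hcabs : c ≤ |c| := le_abs_self c
  have h3 : t * |c| = ρ - t := by nlinarith [htc]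
  have h4 : t ^ 2 * c ≤ t ^ 2 * |c| := mul_le_mul_of_nonneg_left hcabs (sq_nonneg t)
  have h5 : t ^ 2 * |c| = t * ρ - t ^ 2 := by
    have : t ^ 2 * |c| = t * (t * |c|) := by ring
    rw [this, h3]; ring
  nlinarith [h2, h4, h5, mul_pos ht0 hρ, sq_nonneg t, ht0]
lemma ne_zero_of_mem_sph {x : Fin n → ℝ} (hx : x ∈ sph n) : x ≠ 0 := by
  intro h0
  have : (∑ i, x i ^ 2) = 0 := by rw [h0]; simp
  rw [hx] at this; norm_num at this

lemma quadF_of_eig (M : Matrix (Fin n) (Fin n) ℝ) {t : ℝ} {v : Fin n → ℝ}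
    (hv : M.mulVec v = t • v) : quadF M v = t * ∑ i, v i ^ 2 := by
  rw [quadF, hv, dotProduct_smul]
  simp only [smul_eq_mul, dotProduct, Finset.mul_sum]
  exact Finset.sum_congr rfl fun i _ => by ring

theorem lam1_eq_max (hn : 0 < n) (M : Matrix (Fin n) (Fin n) ℝ) (hM : Mᵀ = M)
    {x : Fin n → ℝ} (hx : x ∈ sph n) (hmax : ∀ z ∈ sph n, quadF M z ≤ quadF M x) :
    lam1 M = quadF M x := by
  have heig := eig_of_max M hM hx hmax
  apply IsGreatest.csSup_eq
  constructor
  · exact ⟨x, ne_zero_of_mem_sph hx, heig⟩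
  · rintro t ⟨v, hv0, hveig⟩
    have hc : 0 < ∑ i, v i ^ 2 := sumsq_pos_of_ne_zero hv0
    set c := ∑ i, v i ^ 2 with hcdef
    set vz := (Real.sqrt c)⁻¹ • v with hvz
    have hvzsph : vz ∈ sph n := by
      have : ∑ i, vz i ^ 2 = ((Real.sqrt c)⁻¹) ^ 2 * ∑ i, v i ^ 2 := by
        rw [hvz]; simp [Finset.mul_sum, mul_pow]
      simp only [sph, Set.mem_setOf_eq, this, inv_pow, Real.sq_sqrt hc.le, ← hcdef]
      field_simp
    have hq : quadF M vz = t := by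
      rw [hvz, quadF_smul, quadF_of_eig M hveig, inv_pow, Real.sq_sqrt hc.le, ← hcdef]
      field_simp
    rw [← hq]
    exact hmax vz hvzsph

theorem rayleigh_le_lam1 (hn : 0 < n) (M : Matrix (Fin n) (Fin n) ℝ) (hM : Mᵀ = M)
    {z : Fin n → ℝ} (hz : z ∈ sph n) : quadF M z ≤ lam1 M := by
  obtain ⟨x, hx, hmax⟩ := exists_max hn M
  rw [lam1_eq_max hn M hM hx hmax]
  exact hmax z hz

theorem eig_of_rayleigh_eq (hn : 0 < n) (M : Matrix (Fin n) (Fin n) ℝ) (hM : Mᵀ = M)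
    {z : Fin n → ℝ} (hz : z ∈ sph n) (hq : quadF M z = lam1 M) :
    M.mulVec z = lam1 M • z := by
  obtain ⟨x, hx, hmax⟩ := exists_max hn M
  have hlam := lam1_eq_max hn M hM hx hmax
  have : ∀ y ∈ sph n, quadF M y ≤ quadF M z := by
    intro y hy; rw [hq, hlam]; exact hmax y hy
  have := eig_of_max M hM hz this
  rw [hq] at this; exact this

/-- Perron vector for a symmetric matrix with zero diagonal?? (just: nonneg entries,
positive off-diagonal). -/
theorem exists_perron (hn : 0 < n) (M : Matrix (Fin n) (Fin n) ℝ) (hM : Mᵀ = M)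
    (hnonneg : ∀ i j, 0 ≤ M i j) (hpos : ∀ i j, i ≠ j → 0 < M i j) :
    ∃ x : Fin n → ℝ, x ∈ sph n ∧ (∀ i, 0 < x i) ∧ M.mulVec x = lam1 M • x := by
  obtain ⟨x₀, hx₀, hmax⟩ := exists_max hn M
  have hlam := lam1_eq_max hn M hM hx₀ hmax
  set x : Fin n → ℝ := fun i => |x₀ i| with hxdef
  have hxsph : x ∈ sph n := by
    simpa only [sph, Set.mem_setOf_eq, hxdef, sq_abs] using hx₀
  have hge : quadF M x₀ ≤ quadF M x := by
    rw [quadF_eq, quadF_eq]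
    apply Finset.sum_le_sum; intro i _
    apply Finset.sum_le_sum; intro j _
    calc M i j * x₀ i * x₀ j ≤ |M i j * x₀ i * x₀ j| := le_abs_self _
      _ = M i j * x i * x j := by
          rw [abs_mul, abs_mul, abs_of_nonneg (hnonneg i j)]
  have hq : quadF M x = lam1 M := by
    apply le_antisymm (rayleigh_le_lam1 hn M hM hxsph)
    rw [hlam]; exact hge
  have heig := eig_of_rayleigh_eq hn M hM hxsph hq
  refine ⟨x, hxsph, ?_, heig⟩
  intro i
  rcases lt_or_eq_of_le (abs_nonneg (x₀ i)) with h | h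
  · exact h
  exfalso
  have hxi : x i = 0 := h.symm
  have hrow : (M.mulVec x) i = 0 := by
    rw [heig]; simp [hxi]
  have hx0ne : x ≠ 0 := ne_zero_of_mem_sph hxsph
  rcases Function.ne_iff.mp hx0ne with ⟨j, hj⟩
  have hxj : 0 < x j := lt_of_le_of_ne (abs_nonneg _) (Ne.symm hj)
  have hij : i ≠ j := by rintro rfl; rw [hxi] at hxj; exact lt_irrefl _ hxj
  have : 0 < (M.mulVec x) i := by
    rw [Matrix.mulVec, dotProduct]
    have hterm : 0 < M i j * x j := mul_pos (hpos i j hij) hxj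
    have : ∀ k ∈ Finset.univ, 0 ≤ M i k * x k := fun k _ =>
      mul_nonneg (hnonneg i k) (abs_nonneg _)
    calc (0:ℝ) < M i j * x j := hterm
      _ ≤ ∑ k, M i k * x k := Finset.single_le_sum this (Finset.mem_univ j)
  rw [hrow] at this; exact lt_irrefl _ this
end GTSaux

namespace GTSaux
variable {n : ℕ}

lemma support_getElem {T : SimpleGraph (Fin n)} {a b : Fin n} (p : T.Walk a b) :
    ∀ (i : ℕ) (h : i < p.support.length), p.support[i] = p.getVert i := by
  induction p with
  | nil => intro i h; simp [SimpleGraph.Walk.support_nil] at h; subst h; simp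
  | cons hadj q ih =>
    intro i h
    cases i with
    | zero => simp
    | succ i =>
      rw [SimpleGraph.Walk.getVert_cons_succ]
      simp only [SimpleGraph.Walk.support_cons] at h ⊢
      rw [List.getElem_cons_succ]
      exact ih i (by simpa [SimpleGraph.Walk.length_support] using h)

section Struct
variable {T : SimpleGraph (Fin n)} {u v : Fin n} {p : T.Walk u v}

lemma getVert_injOn (hp : p.IsPath) {i j : ℕ} (hi : i ≤ p.length) (hj : j ≤ p.length)
    (hij : p.getVert i = p.getVert j) : i = j := by
  have hi' : i < p.support.length := by rw [SimpleGraph.Walk.length_support]; omega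
  have hj' : j < p.support.length := by rw [SimpleGraph.Walk.length_support]; omega
  have := (hp.support_nodup.getElem_inj_iff (i := i) (j := j) (hi := hi') (hj := hj'))
  apply this.mp
  rw [support_getElem p i hi', support_getElem p j hj', hij]

lemma getVert_mem_support (p : T.Walk u v) {i : ℕ} (hi : i ≤ p.length) :
    p.getVert i ∈ p.support :=
  SimpleGraph.Walk.mem_support_iff_exists_getVert.mpr ⟨i, rfl, hi⟩

variable (hT : T.IsTree)

/-- no chord between the two endpoints of a long path in a tree -/
lemma no_uv_chord (hT : T.IsTree) (hp : p.IsPath) (hk : 2 ≤ p.length) : ¬ T.Adj u v := by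
  intro hadj
  have huv : u ≠ v := hadj.ne
  obtain ⟨q, hq, huniq⟩ := hT.existsUnique_path u v
  have hsingle : (SimpleGraph.Walk.cons hadj SimpleGraph.Walk.nil).IsPath := by
    rw [SimpleGraph.Walk.cons_isPath_iff]
    exact ⟨SimpleGraph.Walk.IsPath.nil, by simp [huv]⟩
  have h1 : p = SimpleGraph.Walk.cons hadj SimpleGraph.Walk.nil :=
    (huniq p hp).trans (huniq _ hsingle).symm
  have : p.length = 1 := by rw [h1]; simp
  omega

end Struct
end GTSaux


lemma dist_compl_eq_one {G : SimpleGraph (Fin n)} {a b : Fin n} (hab : a ≠ b)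
    (h : ¬G.Adj a b) : Gᶜ.dist a b = 1 :=
  SimpleGraph.dist_eq_one_iff_adj.mpr ((SimpleGraph.compl_adj G a b).mpr ⟨hab, h⟩)

lemma dist_compl_eq_two {G : SimpleGraph (Fin n)} {a b t : Fin n} (hadj : G.Adj a b)
    (h1 : t ≠ a) (h2 : t ≠ b) (h3 : ¬G.Adj a t) (h4 : ¬G.Adj b t) : Gᶜ.dist a b = 2 := by
  have cat : Gᶜ.Adj a t := (SimpleGraph.compl_adj G a t).mpr ⟨h1.symm, h3⟩
  have ctb : Gᶜ.Adj t b := (SimpleGraph.compl_adj G t b).mpr ⟨h2, fun h => h4 h.symm⟩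
  set W : Gᶜ.Walk a b := SimpleGraph.Walk.cons cat (SimpleGraph.Walk.cons ctb SimpleGraph.Walk.nil)
    with hW
  have hle : Gᶜ.dist a b ≤ 2 := by
    have := SimpleGraph.dist_le W
    simpa [hW] using this
  have hne0 : Gᶜ.dist a b ≠ 0 := by
    intro h0
    rcases SimpleGraph.dist_eq_zero_iff_eq_or_not_reachable.mp h0 with h | h
    · exact hadj.ne h
    · exact h ⟨W⟩
  have hne1 : Gᶜ.dist a b ≠ 1 := by
    intro h0
    exact ((SimpleGraph.compl_adj G a b).mp (SimpleGraph.dist_eq_one_iff_adj.mp h0)).2 hadj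
  omega

lemma dist_ge_two_of_adj {G : SimpleGraph (Fin n)} {a b : Fin n} (hadj : G.Adj a b)
    (hreach : Gᶜ.Reachable a b) : 2 ≤ Gᶜ.dist a b := by
  have hne0 : Gᶜ.dist a b ≠ 0 := by
    intro h0
    rcases SimpleGraph.dist_eq_zero_iff_eq_or_not_reachable.mp h0 with h | h
    · exact hadj.ne h
    · exact h hreach
  have hne1 : Gᶜ.dist a b ≠ 1 := by
    intro h0
    exact ((SimpleGraph.compl_adj G a b).mp (SimpleGraph.dist_eq_one_iff_adj.mp h0)).2 hadj
  omega

namespace GTSaux2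
open SimpleGraph Walk

structure Setup (n : ℕ) where
  T : SimpleGraph (Fin n)
  u : Fin n
  v : Fin n
  w : Fin n
  p : T.Walk u v
  hT : T.IsTree
  huv : u ≠ v
  hp : p.IsPath
  hwv : T.Adj w v
  hwmem : w ∈ p.support
  hdeg2 : ∀ x ∈ p.support, x ≠ u → x ≠ v → deg T x = 2
  hdu : deg T u ≠ 1
  hdv : deg T v ≠ 1
  x0 : Fin n
  y0 : Fin n
  hdiam : 4 ≤ T.dist x0 y0

namespace Setup
open scoped Classical
variable {n : ℕ} (st : Setup n)

def k : ℕ := st.p.length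
def z (i : ℕ) : Fin n := st.p.getVert i

lemma z_zero : st.z 0 = st.u := SimpleGraph.Walk.getVert_zero _
lemma z_k : st.z st.k = st.v := SimpleGraph.Walk.getVert_length _

lemma kpos : 1 ≤ st.k := by
  by_contra h
  have : st.p.length = 0 := by simpa [k] using h
  exact st.huv (SimpleGraph.Walk.eq_of_length_eq_zero this)

lemma z_inj {i j : ℕ} (hi : i ≤ st.k) (hj : j ≤ st.k) (hij : st.z i = st.z j) : i = j :=
  GTSaux.getVert_injOn st.hp hi hj hij

lemma adj_z_succ {i : ℕ} (hi : i < st.k) : st.T.Adj (st.z i) (st.z (i + 1)) :=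
  SimpleGraph.Walk.adj_getVert_succ _ hi

lemma z_mem {i : ℕ} (hi : i ≤ st.k) : st.z i ∈ st.p.support :=
  GTSaux.getVert_mem_support _ hi

lemma mem_support_iff {x : Fin n} : x ∈ st.p.support ↔ ∃ i, i ≤ st.k ∧ st.z i = x := by
  rw [SimpleGraph.Walk.mem_support_iff_exists_getVert]
  constructor
  · rintro ⟨i, h1, h2⟩; exact ⟨i, h2, h1⟩
  · rintro ⟨i, h1, h2⟩; exact ⟨i, h2, h1⟩

lemma adj_uv_k_eq_one (hadj : st.T.Adj st.u st.v) : st.k = 1 := by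
  have := st.kpos
  by_contra h
  have hkl : st.k = st.p.length := rfl
  exact GTSaux.no_uv_chord st.hT st.hp (by omega) hadj

lemma interior_nbrSet {i : ℕ} (h0 : 0 < i) (hk : i < st.k) :
    st.T.neighborSet (st.z i) = {st.z (i - 1), st.z (i + 1)} := by
  have hprev : st.T.Adj (st.z (i-1)) (st.z i) := by
    have := st.adj_z_succ (i := i - 1) (by omega)
    simpa [Nat.sub_add_cancel h0] using this
  have hnext := st.adj_z_succ hk
  have hne : st.z (i-1) ≠ st.z (i+1) := by
    intro h; have := st.z_inj (by omega) (by omega) h; omega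
  have hsub : {st.z (i - 1), st.z (i + 1)} ⊆ st.T.neighborSet (st.z i) := by
    rintro x (rfl | rfl)
    · exact hprev.symm
    · exact hnext
  have hcard2 : ({st.z (i - 1), st.z (i + 1)} : Set (Fin n)).ncard = 2 :=
    Set.ncard_pair hne
  have hdeg : (st.T.neighborSet (st.z i)).ncard = 2 := by
    apply st.hdeg2 _ (st.z_mem (by omega))
    · intro h; rw [← st.z_zero] at h; have := st.z_inj (by omega) (by omega) h; omega
    · intro h; rw [← st.z_k] at h; have := st.z_inj (by omega) (by omega) h; omega
  exact (Set.eq_of_subset_of_ncard_le hsub (by rw [hcard2, hdeg]) (Set.toFinite _)).symm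

lemma adj_z_iff {i j : ℕ} (hi : i ≤ st.k) (hj : j ≤ st.k) :
    st.T.Adj (st.z i) (st.z j) ↔ (i + 1 = j ∨ j + 1 = i) := by
  constructor
  · intro hadj
    have hne : i ≠ j := fun h => hadj.ne (by rw [h])
    -- case: one of i, j is interior
    by_cases hiint : 0 < i ∧ i < st.k
    · have := st.interior_nbrSet hiint.1 hiint.2
      have hmem : st.z j ∈ st.T.neighborSet (st.z i) := hadj
      rw [this] at hmem
      rcases hmem with h | h
      · have := st.z_inj hj (by omega) h; omega
      · have := st.z_inj hj (by omega) h; omega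
    by_cases hjint : 0 < j ∧ j < st.k
    · have := st.interior_nbrSet hjint.1 hjint.2
      have hmem : st.z i ∈ st.T.neighborSet (st.z j) := hadj.symm
      rw [this] at hmem
      rcases hmem with h | h
      · have := st.z_inj hi (by omega) h; omega
      · have := st.z_inj hi (by omega) h; omega
    -- both are endpoints
    have hiend : i = 0 ∨ i = st.k := by omega
    have hjend : j = 0 ∨ j = st.k := by omega
    have hk1 : st.k = 1 := by
      apply st.adj_uv_k_eq_one
      rcases hiend with rfl | rfl <;> rcases hjend with rfl | rfl
      · exact absurd rfl hne
      · rw [← st.z_zero, ← st.z_k]; exact hadj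
      · rw [← st.z_zero, ← st.z_k]; exact hadj.symm
      · exact absurd rfl hne
    omega
  · rintro (rfl | rfl)
    · exact st.adj_z_succ (by omega)
    · exact (st.adj_z_succ (by omega)).symm

lemma w_eq : st.w = st.z (st.k - 1) := by
  obtain ⟨m, hm, hmw⟩ := st.mem_support_iff.mp st.hwmem
  have hadj : st.T.Adj (st.z m) (st.z st.k) := by rw [hmw, st.z_k]; exact st.hwv
  have := (st.adj_z_iff hm le_rfl).mp hadj
  have hk := st.kpos
  have hmk : m = st.k - 1 := by omega
  rw [← hmw, hmk]

lemma no_path2 {s : Fin n} (hs : s ∉ st.p.support) : ¬(st.T.Adj st.u s ∧ st.T.Adj s st.v) := by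
  rintro ⟨h1, h2⟩
  obtain ⟨q, hq, huniq⟩ := st.hT.existsUnique_path st.u st.v
  have hsu : s ≠ st.u := by rintro rfl; exact hs st.p.start_mem_support
  have hsv : s ≠ st.v := by rintro rfl; exact hs st.p.end_mem_support
  set p2 : st.T.Walk st.u st.v :=
    SimpleGraph.Walk.cons h1 (SimpleGraph.Walk.cons h2 SimpleGraph.Walk.nil) with hp2
  have hp2path : p2.IsPath := by
    rw [hp2, SimpleGraph.Walk.cons_isPath_iff, SimpleGraph.Walk.cons_isPath_iff]
    refine ⟨⟨SimpleGraph.Walk.IsPath.nil, by simp [hsv]⟩, ?_⟩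
    simp only [SimpleGraph.Walk.support_cons, SimpleGraph.Walk.support_nil]
    intro hmem
    simp only [List.mem_cons, List.mem_singleton, List.not_mem_nil] at hmem
    rcases hmem with h | h | h
    · exact hsu h.symm
    · exact st.huv h
    · exact h.elim
  have heq : st.p = p2 := (huniq _ st.hp).trans (huniq _ hp2path).symm
  apply hs
  have : p2.getVert 1 = s := rfl
  rw [← this, ← heq]
  have hlen : st.p.length = p2.length := by rw [heq]
  have hlen2 : p2.length = 2 := by simp [hp2]
  exact st.z_mem (by have hkl : st.k = st.p.length := rfl; omega)

def Sset : Finset (Fin n) := Finset.univ.filter (fun b => st.T.Adj st.v b ∧ b ≠ st.w)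
def Cset : Finset (Fin n) := Finset.univ.filter (fun c => st.T.Adj st.u c ∧ c ≠ st.z 1)

lemma mem_Sset {b : Fin n} : b ∈ st.Sset ↔ st.T.Adj st.v b ∧ b ≠ st.w := by
  simp [Sset]

lemma mem_Cset {c : Fin n} : c ∈ st.Cset ↔ st.T.Adj st.u c ∧ c ≠ st.z 1 := by
  simp [Cset]

lemma u_not_mem_Sset : st.u ∉ st.Sset := by
  rw [st.mem_Sset]
  rintro ⟨hadj, hne⟩
  have hk1 := st.adj_uv_k_eq_one hadj.symm
  apply hne
  rw [st.w_eq, hk1]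
  exact st.z_zero.symm ▸ rfl

lemma v_not_mem_Sset : st.v ∉ st.Sset := by
  rw [st.mem_Sset]; rintro ⟨hadj, -⟩; exact hadj.ne rfl

lemma Sset_not_mem_support {b : Fin n} (hb : b ∈ st.Sset) : b ∉ st.p.support := by
  rw [st.mem_Sset] at hb
  intro hmem
  obtain ⟨j, hj, hjb⟩ := st.mem_support_iff.mp hmem
  have hadj : st.T.Adj (st.z st.k) (st.z j) := by rw [st.z_k, hjb]; exact hb.1
  have := (st.adj_z_iff le_rfl hj).mp hadj
  have hk := st.kpos
  have hjk : j = st.k - 1 := by omega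
  apply hb.2
  rw [← hjb, hjk, st.w_eq]

lemma not_adj_u_Sset {b : Fin n} (hb : b ∈ st.Sset) : ¬st.T.Adj st.u b := by
  intro hadj
  exact st.no_path2 (st.Sset_not_mem_support hb) ⟨hadj, ((st.mem_Sset).mp hb).1.symm⟩

lemma u_not_mem_Cset : st.u ∉ st.Cset := by
  rw [st.mem_Cset]; rintro ⟨hadj, -⟩; exact hadj.ne rfl

lemma Cset_not_mem_support {c : Fin n} (hc : c ∈ st.Cset) : c ∉ st.p.support := by
  rw [st.mem_Cset] at hc
  intro hmem
  obtain ⟨j, hj, hjc⟩ := st.mem_support_iff.mp hmem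
  have hadj : st.T.Adj (st.z 0) (st.z j) := by rw [st.z_zero, hjc]; exact hc.1
  have := (st.adj_z_iff (Nat.zero_le _) hj).mp hadj
  rcases this with h | h
  · exact hc.2 (by rw [← hjc, ← h])
  · omega

lemma not_adj_v_Cset {c : Fin n} (hc : c ∈ st.Cset) : ¬st.T.Adj st.v c := by
  intro hadj
  exact st.no_path2 (st.Cset_not_mem_support hc) ⟨((st.mem_Cset).mp hc).1, hadj.symm⟩

lemma w_not_mem_Sset : st.w ∉ st.Sset := by
  rw [st.mem_Sset]; rintro ⟨-, h⟩; exact h rfl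

lemma deg_eq_ncard (G : SimpleGraph (Fin n)) (x : Fin n) :
    deg G x = (G.neighborSet x).ncard := rfl

lemma Sset_nonempty : ∃ b, b ∈ st.Sset := by
  by_contra h
  push_neg at h
  apply st.hdv
  have hN : st.T.neighborSet st.v = {st.w} := by
    ext x
    simp only [SimpleGraph.mem_neighborSet, Set.mem_singleton_iff]
    constructor
    · intro hadj
      by_contra hne
      exact h x (st.mem_Sset.mpr ⟨hadj, hne⟩)
    · rintro rfl; exact st.hwv.symm
  rw [deg_eq_ncard, hN, Set.ncard_singleton]

lemma adj_u_z1 : st.T.Adj st.u (st.z 1) := by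
  have := st.adj_z_succ (i := 0) st.kpos
  rwa [st.z_zero] at this

lemma Cset_nonempty : ∃ c, c ∈ st.Cset := by
  by_contra h
  push_neg at h
  apply st.hdu
  have hN : st.T.neighborSet st.u = {st.z 1} := by
    ext x
    simp only [SimpleGraph.mem_neighborSet, Set.mem_singleton_iff]
    constructor
    · intro hadj
      by_contra hne
      exact h x (st.mem_Cset.mpr ⟨hadj, hne⟩)
    · rintro rfl; exact st.adj_u_z1
  rw [deg_eq_ncard, hN, Set.ncard_singleton]

/-- The key edge characterization of the shifted graph. -/
lemma shift_adj {a b : Fin n} :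
    (shift st.T st.u st.v st.w).Adj a b ↔
      ((st.T.Adj a b ∧ ¬(a = st.v ∧ b ∈ st.Sset) ∧ ¬(b = st.v ∧ a ∈ st.Sset)) ∨
       (a = st.u ∧ b ∈ st.Sset) ∨ (b = st.u ∧ a ∈ st.Sset)) := by
  rw [shift, SimpleGraph.fromRel_adj]
  simp only [st.mem_Sset]
  constructor
  · rintro ⟨hab, h | h⟩
    · rcases h with ⟨hadj, hcond⟩ | ⟨rfl, hadjvb, hbw⟩
      · left
        refine ⟨hadj, ?_, ?_⟩
        · rintro ⟨rfl, -, hbw⟩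
          rcases hcond with ⟨h1, -⟩ | ⟨-, h2⟩ | ⟨h3, -⟩
          · exact h1 rfl
          · exact hbw h2
          · exact hadj.ne h3.symm
        · rintro ⟨rfl, -, haw⟩
          rcases hcond with ⟨-, h1⟩ | ⟨h2, -⟩ | ⟨-, h3⟩
          · exact h1 rfl
          · exact hadj.ne h2
          · exact haw h3
      · right; left; exact ⟨rfl, hadjvb, hbw⟩
    · rcases h with ⟨hadj, hcond⟩ | ⟨rfl, hadjva, haw⟩
      · left
        refine ⟨hadj.symm, ?_, ?_⟩
        · rintro ⟨rfl, -, hbw⟩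
          rcases hcond with ⟨-, h1⟩ | ⟨h2, -⟩ | ⟨-, h3⟩
          · exact h1 rfl
          · exact hadj.ne h2
          · exact hbw h3
        · rintro ⟨rfl, -, haw⟩
          rcases hcond with ⟨h1, -⟩ | ⟨-, h2⟩ | ⟨h3, -⟩
          · exact h1 rfl
          · exact haw h2
          · exact hadj.ne h3.symm
      · right; right; exact ⟨rfl, hadjva, haw⟩
  · rintro (⟨hadj, h1, h2⟩ | ⟨rfl, hadjvb, hbw⟩ | ⟨rfl, hadjva, haw⟩)
    · refine ⟨hadj.ne, Or.inl (Or.inl ⟨hadj, ?_⟩)⟩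
      by_cases hav : a = st.v
      · subst hav
        by_cases hbw' : b = st.w
        · exact Or.inr (Or.inl ⟨rfl, hbw'⟩)
        · exact absurd ⟨rfl, hadj, hbw'⟩ h1
      · by_cases hbv : b = st.v
        · subst hbv
          by_cases haw' : a = st.w
          · exact Or.inr (Or.inr ⟨rfl, haw'⟩)
          · exact absurd ⟨rfl, hadj.symm, haw'⟩ h2
        · exact Or.inl ⟨hav, hbv⟩
    · refine ⟨?_, Or.inl (Or.inr ⟨rfl, hadjvb, hbw⟩)⟩
      rintro rfl
      exact st.u_not_mem_Sset (st.mem_Sset.mpr ⟨hadjvb, hbw⟩)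
    · refine ⟨?_, Or.inr (Or.inr ⟨rfl, hadjva, haw⟩)⟩
      rintro rfl
      exact st.u_not_mem_Sset (st.mem_Sset.mpr ⟨hadjva, haw⟩)

/-- In the shifted graph, `v` is a pendant vertex attached to `w`. -/
lemma shift_adj_v {x : Fin n} : (shift st.T st.u st.v st.w).Adj st.v x ↔ x = st.w := by
  rw [st.shift_adj]
  constructor
  · rintro (⟨hadj, h1, -⟩ | ⟨huv', -⟩ | ⟨-, hvS⟩)
    · by_contra hxw
      exact h1 ⟨rfl, st.mem_Sset.mpr ⟨hadj, hxw⟩⟩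
    · exact absurd huv'.symm st.huv
    · exact absurd hvS st.v_not_mem_Sset
  · rintro rfl
    left
    refine ⟨st.hwv.symm, ?_, ?_⟩
    · rintro ⟨-, hwS⟩; exact st.w_not_mem_Sset hwS
    · rintro ⟨hwv', -⟩; exact st.hwv.ne hwv'

lemma shift_adj_u {x : Fin n} :
    (shift st.T st.u st.v st.w).Adj st.u x ↔ (st.T.Adj st.u x ∨ x ∈ st.Sset) := by
  rw [st.shift_adj]
  constructor
  · rintro (⟨hadj, -, -⟩ | ⟨-, hxS⟩ | ⟨rfl, huS⟩)
    · exact Or.inl hadj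
    · exact Or.inr hxS
    · exact absurd huS st.u_not_mem_Sset
  · rintro (hadj | hxS)
    · left
      refine ⟨hadj, ?_, ?_⟩
      · rintro ⟨huv', -⟩; exact st.huv huv'
      · rintro ⟨rfl, huS⟩; exact st.u_not_mem_Sset huS
    · exact Or.inr (Or.inl ⟨rfl, hxS⟩)


lemma exists_common_nonnbr {a b : Fin n} (hab : st.T.Adj a b) :
    ∃ t, t ≠ a ∧ t ≠ b ∧ ¬st.T.Adj a t ∧ ¬st.T.Adj b t := by
  by_contra hcon
  push_neg at hcon
  have hconn := st.hT.isConnected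
  have hab1 : st.T.dist a b = 1 := SimpleGraph.dist_eq_one_iff_adj.mpr hab
  have key : ∀ t, st.T.dist a t ≤ 1 ∨ st.T.dist b t ≤ 1 := by
    intro t
    by_cases h1 : t = a
    · left; subst h1; simp [SimpleGraph.dist_self]
    by_cases h2 : t = b
    · right; subst h2; simp [SimpleGraph.dist_self]
    by_cases h3 : st.T.Adj a t
    · left; exact le_of_eq (SimpleGraph.dist_eq_one_iff_adj.mpr h3)
    · right; exact le_of_eq (SimpleGraph.dist_eq_one_iff_adj.mpr (hcon t h1 h2 h3))
  have hbnd : ∀ s t : Fin n, st.T.dist a s ≤ 1 → st.T.dist b t ≤ 1 → st.T.dist s t ≤ 3 := by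
    intro s t hs ht
    calc st.T.dist s t ≤ st.T.dist s a + st.T.dist a t := hconn.dist_triangle
      _ ≤ st.T.dist s a + (st.T.dist a b + st.T.dist b t) :=
          Nat.add_le_add_left hconn.dist_triangle _
      _ ≤ 1 + (1 + 1) := by
          have hsa : st.T.dist s a ≤ 1 := by rwa [SimpleGraph.dist_comm]
          omega
      _ ≤ 3 := by norm_num
  have hbnd2 : ∀ s t : Fin n, st.T.dist s t ≤ 3 := by
    intro s t
    rcases key s with hs | hs <;> rcases key t with ht | ht
    · calc st.T.dist s t ≤ st.T.dist s a + st.T.dist a t := hconn.dist_triangle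
        _ ≤ 1 + 1 := by
            have : st.T.dist s a ≤ 1 := by rwa [SimpleGraph.dist_comm]
            omega
        _ ≤ 3 := by norm_num
    · exact hbnd s t hs ht
    · rw [SimpleGraph.dist_comm]; exact hbnd t s ht hs
    · calc st.T.dist s t ≤ st.T.dist s b + st.T.dist b t := hconn.dist_triangle
        _ ≤ 1 + 1 := by
            have : st.T.dist s b ≤ 1 := by rwa [SimpleGraph.dist_comm]
            omega
        _ ≤ 3 := by norm_num
  have := hbnd2 st.x0 st.y0
  have := st.hdiam
  omega

lemma dist_complT {a b : Fin n} (hab : a ≠ b) :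
    st.Tᶜ.dist a b = if st.T.Adj a b then 2 else 1 := by
  by_cases h : st.T.Adj a b
  · rw [if_pos h]
    obtain ⟨t, h1, h2, h3, h4⟩ := st.exists_common_nonnbr h
    exact dist_compl_eq_two h h1 h2 h3 h4
  · rw [if_neg h]
    exact dist_compl_eq_one hab h

/-- a vertex which witnesses that `v` and `w` are "far" in the shifted graph -/
lemma exists_far : ∃ t, t ≠ st.v ∧ t ≠ st.w ∧
    ¬(shift st.T st.u st.v st.w).Adj st.v t ∧ ¬(shift st.T st.u st.v st.w).Adj st.w t := by
  by_cases hk : st.k = 1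
  · -- here w = u and T.Adj u v
    have hwu : st.w = st.u := by rw [st.w_eq, hk]; exact st.z_zero
    have hadjuv : st.T.Adj st.u st.v := by
      have := st.adj_z_succ (i := 0) st.kpos
      rw [st.z_zero] at this
      have h1 : (0:ℕ) + 1 = st.k := by omega
      rwa [h1, st.z_k] at this
    obtain ⟨t, h1, h2, h3, h4⟩ := st.exists_common_nonnbr hadjuv
    refine ⟨t, h2, by rw [hwu]; exact h1, ?_, ?_⟩
    · rw [st.shift_adj_v]
      intro h; rw [hwu] at h; exact h1 h
    · intro h
      rw [st.shift_adj] at h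
      rcases h with ⟨hadj, -, -⟩ | ⟨-, hS⟩ | ⟨htu, -⟩
      · rw [hwu] at hadj; exact h3 hadj
      · exact h4 (st.mem_Sset.mp hS).1
      · exact h1 htu
  · -- k ≥ 2, take t ∈ S
    have hk2 : 2 ≤ st.k := by have := st.kpos; omega
    obtain ⟨s, hs⟩ := st.Sset_nonempty
    have hsupp := st.Sset_not_mem_support hs
    have hsv : s ≠ st.v := fun h => hsupp (h ▸ st.p.end_mem_support)
    have hsw : s ≠ st.w := (st.mem_Sset.mp hs).2
    have hwint : st.T.neighborSet st.w = {st.z (st.k - 2), st.z st.k} := by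
      rw [st.w_eq]
      have := st.interior_nbrSet (i := st.k - 1) (by omega) (by omega)
      have e1 : st.k - 1 - 1 = st.k - 2 := by omega
      have e2 : st.k - 1 + 1 = st.k := by omega
      rwa [e1, e2] at this
    have hnadjws : ¬st.T.Adj st.w s := by
      intro h
      have : s ∈ st.T.neighborSet st.w := h
      rw [hwint] at this
      rcases this with h' | h'
      · exact hsupp (h' ▸ st.z_mem (by omega))
      · exact hsupp (h' ▸ st.z_mem le_rfl)
    refine ⟨s, hsv, hsw, ?_, ?_⟩
    · rw [st.shift_adj_v]; exact hsw
    · rw [st.shift_adj]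
      rintro (⟨hadj, -, -⟩ | ⟨hwu, -⟩ | ⟨hsu, -⟩)
      · exact hnadjws hadj
      · have : st.w = st.z (st.k - 1) := st.w_eq
        rw [← st.z_zero] at hwu
        have := st.z_inj (i := st.k - 1) (j := 0) (by omega) (by omega) (by rw [← this, hwu])
        omega
      · rw [hsu] at hs
        exact st.u_not_mem_Sset hs

lemma compl_shift_reachable (x : Fin n) :
    (shift st.T st.u st.v st.w)ᶜ.Reachable x st.v := by
  obtain ⟨t, htv, htw, h3, h4⟩ := st.exists_far
  set G1 := shift st.T st.u st.v st.w with hG1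
  have hvt : G1ᶜ.Adj st.v t := (SimpleGraph.compl_adj _ _ _).mpr ⟨Ne.symm htv, h3⟩
  by_cases hxv : x = st.v
  · subst hxv; rfl
  by_cases hadj : G1.Adj x st.v
  · -- x = w
    have hxw : x = st.w := by
      have := st.shift_adj_v (x := x)
      rw [← hG1] at this
      exact this.mp hadj.symm
    subst hxw
    have hwt : G1ᶜ.Adj st.w t := (SimpleGraph.compl_adj _ _ _).mpr ⟨Ne.symm htw, h4⟩
    exact (hwt.reachable).trans hvt.symm.reachable
  · exact ((SimpleGraph.compl_adj _ _ _).mpr ⟨hxv, hadj⟩).reachable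

lemma dist_shift_ge {a b : Fin n} (hadj : (shift st.T st.u st.v st.w).Adj a b) :
    2 ≤ (shift st.T st.u st.v st.w)ᶜ.dist a b := by
  apply dist_ge_two_of_adj hadj
  exact (st.compl_shift_reachable a).trans (st.compl_shift_reachable b).symm

lemma dist_shift_vw : (shift st.T st.u st.v st.w)ᶜ.dist st.v st.w = 2 := by
  obtain ⟨t, htv, htw, h3, h4⟩ := st.exists_far
  have hadjvw : (shift st.T st.u st.v st.w).Adj st.v st.w := st.shift_adj_v.mpr rfl
  exact dist_compl_eq_two hadjvw htv htw h3 h4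

lemma dist_shift_eq_one {a b : Fin n} (hab : a ≠ b)
    (h : ¬(shift st.T st.u st.v st.w).Adj a b) :
    (shift st.T st.u st.v st.w)ᶜ.dist a b = 1 :=
  dist_compl_eq_one hab h

lemma z_eq_u_iff {i : ℕ} (hi : i ≤ st.k) : st.z i = st.u ↔ i = 0 := by
  constructor
  · intro h; exact st.z_inj hi (Nat.zero_le _) (by rw [h, st.z_zero])
  · rintro rfl; exact st.z_zero

lemma z_eq_v_iff {i : ℕ} (hi : i ≤ st.k) : st.z i = st.v ↔ i = st.k := by
  constructor
  · intro h; exact st.z_inj hi le_rfl (by rw [h, st.z_k])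
  · rintro rfl; exact st.z_k

lemma adj_u_iff {x : Fin n} : st.T.Adj st.u x ↔ (x = st.z 1 ∨ x ∈ st.Cset) := by
  constructor
  · intro h
    by_cases hx : x = st.z 1
    · exact Or.inl hx
    · exact Or.inr (st.mem_Cset.mpr ⟨h, hx⟩)
  · rintro (rfl | h)
    · exact st.adj_u_z1
    · exact (st.mem_Cset.mp h).1

lemma adj_v_iff {x : Fin n} : st.T.Adj st.v x ↔ (x = st.w ∨ x ∈ st.Sset) := by
  constructor
  · intro h
    by_cases hx : x = st.w
    · exact Or.inl hx
    · exact Or.inr (st.mem_Sset.mpr ⟨h, hx⟩)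
  · rintro (rfl | h)
    · exact st.hwv.symm
    · exact (st.mem_Sset.mp h).1

lemma not_adj_interior {i : ℕ} {b : Fin n} (h0 : 0 < i) (hik : i < st.k)
    (hb : b ∉ st.p.support) : ¬st.T.Adj (st.z i) b := by
  intro h
  have : b ∈ st.T.neighborSet (st.z i) := h
  rw [st.interior_nbrSet h0 hik] at this
  rcases this with h' | h'
  · exact hb (h' ▸ st.z_mem (by omega))
  · exact hb (h' ▸ st.z_mem (by omega))

/-- the path-reversing involution -/
def sigma (x : Fin n) : Fin n :=
  if h : x ∈ st.p.support then
    st.p.support[st.k - st.p.support.idxOf x]'(by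
      rw [SimpleGraph.Walk.length_support]
      have : st.k = st.p.length := rfl
      omega)
  else x

lemma sigma_fix {x : Fin n} (hx : x ∉ st.p.support) : st.sigma x = x := dif_neg hx

lemma sigma_z {i : ℕ} (hi : i ≤ st.k) : st.sigma (st.z i) = st.z (st.k - i) := by
  have hkl : st.k = st.p.length := rfl
  have hlen : st.p.support.length = st.k + 1 := by
    rw [SimpleGraph.Walk.length_support]
    omega
  have hmem : st.z i ∈ st.p.support := st.z_mem hi
  have hidx : st.p.support.idxOf (st.z i) = i := by
    have hi' : i < st.p.support.length := by omega
    have hget : st.p.support[i] = st.z i := GTSaux.support_getElem st.p i hi'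
    have hidxlt : st.p.support.idxOf (st.z i) < st.p.support.length :=
      List.idxOf_lt_length_iff.mpr hmem
    have hgetidx : st.p.support[st.p.support.idxOf (st.z i)] = st.z i :=
      List.getElem_idxOf hidxlt
    exact (st.hp.support_nodup.getElem_inj_iff.mp (hgetidx.trans hget.symm))
  rw [sigma, dif_pos hmem]
  simp only [hidx]
  exact GTSaux.support_getElem st.p (st.k - i) (by omega)

lemma sigma_invol : Function.Involutive st.sigma := by
  intro x
  by_cases hx : x ∈ st.p.support
  · obtain ⟨i, hi, rfl⟩ := st.mem_support_iff.mp hx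
    rw [st.sigma_z hi, st.sigma_z (by omega)]
    congr 1
    omega
  · rw [st.sigma_fix hx, st.sigma_fix hx]

lemma sigma_inj : Function.Injective st.sigma := st.sigma_invol.injective

def sigmaE : Equiv.Perm (Fin n) := st.sigma_invol.toPerm _

lemma sigmaE_apply (x : Fin n) : st.sigmaE x = st.sigma x := rfl

lemma sigma_u : st.sigma st.u = st.v := by
  rw [← st.z_zero, st.sigma_z (Nat.zero_le _), Nat.sub_zero, st.z_k]

lemma sigma_v : st.sigma st.v = st.u := by
  rw [← st.z_k, st.sigma_z le_rfl, Nat.sub_self, st.z_zero]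

lemma sigma_w : st.sigma st.w = st.z 1 := by
  rw [st.w_eq, st.sigma_z (by omega)]
  congr 1
  have := st.kpos
  omega

lemma sigma_mem_support {x : Fin n} (hx : x ∈ st.p.support) :
    st.sigma x ∈ st.p.support := by
  obtain ⟨i, hi, rfl⟩ := st.mem_support_iff.mp hx
  rw [st.sigma_z hi]
  exact st.z_mem (by omega)

lemma sigma_mem_Sset_iff {x : Fin n} : st.sigma x ∈ st.Sset ↔ x ∈ st.Sset := by
  by_cases hx : x ∈ st.p.support
  · constructor
    · intro h; exact absurd (st.sigma_mem_support hx) (st.Sset_not_mem_support h)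
    · intro h; exact absurd hx (st.Sset_not_mem_support h)
  · rw [st.sigma_fix hx]

/-- The decisive fact: conjugating the shifted graph by the path reversal,
compared with `T`, exactly the `u`–`C` edges have moved to `v`–`C` edges. -/
lemma shift_adj_sigma {a b : Fin n} :
    (shift st.T st.u st.v st.w).Adj (st.sigma a) (st.sigma b) ↔
      ((st.T.Adj a b ∧ ¬(a = st.u ∧ b ∈ st.Cset) ∧ ¬(b = st.u ∧ a ∈ st.Cset)) ∨
       (a = st.v ∧ b ∈ st.Cset) ∨ (b = st.v ∧ a ∈ st.Cset)) := by
  have hkl : st.k = st.p.length := rfl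
  have hk1 := st.kpos
  -- helper facts
  have husupp : st.u ∈ st.p.support := st.p.start_mem_support
  have hvsupp : st.v ∈ st.p.support := st.p.end_mem_support
  have hwsupp : st.w ∈ st.p.support := st.hwmem
  have hz1supp : st.z 1 ∈ st.p.support := st.z_mem (by omega)
  -- the two asymmetric in/out cases, as a helper
  have main2 : ∀ a b : Fin n, a ∈ st.p.support → b ∉ st.p.support →
      ((shift st.T st.u st.v st.w).Adj (st.sigma a) (st.sigma b) ↔
      ((st.T.Adj a b ∧ ¬(a = st.u ∧ b ∈ st.Cset) ∧ ¬(b = st.u ∧ a ∈ st.Cset)) ∨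
       (a = st.v ∧ b ∈ st.Cset) ∨ (b = st.v ∧ a ∈ st.Cset))) := by
    intro a b ha hb
    obtain ⟨i, hi, rfl⟩ := st.mem_support_iff.mp ha
    rw [st.sigma_z hi, st.sigma_fix hb, st.shift_adj]
    have hbu : b ≠ st.u := fun h => hb (h ▸ husupp)
    have hbv : b ≠ st.v := fun h => hb (h ▸ hvsupp)
    have hbS : b ∈ st.Sset ↔ (st.T.Adj st.v b) := by
      rw [st.mem_Sset]
      exact ⟨fun h => h.1, fun h => ⟨h, fun hw => hb (hw ▸ hwsupp)⟩⟩
    have hbC : b ∈ st.Cset ↔ (st.T.Adj st.u b) := by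
      rw [st.mem_Cset]
      exact ⟨fun h => h.1, fun h => ⟨h, fun hz => hb (hz ▸ hz1supp)⟩⟩
    have hzkiS : st.z (st.k - i) ∉ st.Sset := fun h =>
      st.Sset_not_mem_support h (st.z_mem (by omega))
    rcases Nat.lt_trichotomy i 0 with h0 | rfl | hipos
    · omega
    · -- i = 0 : a = u, σ a = v
      rw [Nat.sub_zero, st.z_k, st.z_zero]
      constructor
      · rintro (⟨hadj, h1, -⟩ | ⟨hvu, -⟩ | ⟨hbu', -⟩)
        · exfalso; exact h1 ⟨rfl, st.mem_Sset.mpr ⟨hadj, fun h => hb (h ▸ hwsupp)⟩⟩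
        · exact absurd hvu.symm st.huv
        · exact absurd hbu' hbu
      · rintro (⟨hadj, h1, -⟩ | ⟨huv', -⟩ | ⟨hbv', -⟩)
        · exfalso; exact h1 ⟨rfl, hbC.mpr hadj⟩
        · exact absurd huv' st.huv
        · exact absurd hbv' hbv
    · rcases Nat.lt_trichotomy i st.k with hik | rfl | h
      · -- interior
        have hint1 : ¬st.T.Adj (st.z (st.k - i)) b :=
          st.not_adj_interior (by omega) (by omega) hb
        have hint2 : ¬st.T.Adj (st.z i) b := st.not_adj_interior hipos hik hb
        have hzu : st.z (st.k - i) ≠ st.u := by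
          intro h; have := (st.z_eq_u_iff (i := st.k - i) (by omega)).mp h; omega
        have hziu : st.z i ≠ st.u := by
          intro h; have := (st.z_eq_u_iff hi).mp h; omega
        have hziv : st.z i ≠ st.v := by
          intro h; have := (st.z_eq_v_iff hi).mp h; omega
        constructor
        · rintro (⟨hadj, -, -⟩ | ⟨hzu', -⟩ | ⟨hbu', -⟩)
          · exact absurd hadj hint1
          · exact absurd hzu' hzu
          · exact absurd hbu' hbu
        · rintro (⟨hadj, -, -⟩ | ⟨hziv', -⟩ | ⟨hbv', -⟩)
          · exact absurd hadj hint2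
          · exact absurd hziv' hziv
          · exact absurd hbv' hbv
      · -- i = k : a = v, σ a = u
        rw [Nat.sub_self, st.z_zero, st.z_k]
        constructor
        · rintro (⟨hadj, -, -⟩ | ⟨-, hbS'⟩ | ⟨hbu', -⟩)
          · -- T.Adj u b, so b ∈ C
            right; left; exact ⟨rfl, hbC.mpr hadj⟩
          · -- b ∈ S so T.Adj v b
            left
            refine ⟨(st.mem_Sset.mp hbS').1, ?_, ?_⟩
            · rintro ⟨hvu', -⟩; first | exact st.huv hvu'.symm | exact st.huv hvu'
            · rintro ⟨hbu', -⟩; first | exact hbu hbu' | exact hbv hbu'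
          · exact absurd hbu' hbu
        · rintro (⟨hadj, -, -⟩ | ⟨-, hbC'⟩ | ⟨hbv', -⟩)
          · -- T.Adj v b with b ∉ support: b ∈ S
            right; left; exact ⟨rfl, hbS.mpr hadj⟩
          · -- b ∈ C: T.Adj u b
            left
            refine ⟨hbC.mp hbC', ?_, ?_⟩
            · rintro ⟨huv', -⟩; first | exact st.huv huv' | exact st.huv huv'.symm
            · rintro ⟨hbu', -⟩; first | exact hbu hbu' | exact hbv hbu'
          · exact absurd hbv' hbv
      · omega
  -- symmetry reduction
  by_cases ha : a ∈ st.p.support <;> by_cases hb : b ∈ st.p.support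
  · -- both on the path
    obtain ⟨i, hi, rfl⟩ := st.mem_support_iff.mp ha
    obtain ⟨j, hj, rfl⟩ := st.mem_support_iff.mp hb
    rw [st.sigma_z hi, st.sigma_z hj, st.shift_adj]
    have hSi : st.z i ∉ st.Sset := fun h => st.Sset_not_mem_support h (st.z_mem hi)
    have hSj : st.z j ∉ st.Sset := fun h => st.Sset_not_mem_support h (st.z_mem hj)
    have hSki : st.z (st.k - i) ∉ st.Sset := fun h =>
      st.Sset_not_mem_support h (st.z_mem (by omega))
    have hSkj : st.z (st.k - j) ∉ st.Sset := fun h =>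
      st.Sset_not_mem_support h (st.z_mem (by omega))
    have hCi : st.z i ∉ st.Cset := fun h => st.Cset_not_mem_support h (st.z_mem hi)
    have hCj : st.z j ∉ st.Cset := fun h => st.Cset_not_mem_support h (st.z_mem hj)
    have hL : st.T.Adj (st.z (st.k - i)) (st.z (st.k - j)) ↔ (i + 1 = j ∨ j + 1 = i) := by
      rw [st.adj_z_iff (by omega) (by omega)]
      omega
    have hR : st.T.Adj (st.z i) (st.z j) ↔ (i + 1 = j ∨ j + 1 = i) := st.adj_z_iff hi hj
    constructor
    · rintro (⟨hadj, -, -⟩ | ⟨-, h⟩ | ⟨-, h⟩)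
      · left
        refine ⟨hR.mpr (hL.mp hadj), ?_, ?_⟩
        · rintro ⟨-, h⟩; exact hCj h
        · rintro ⟨-, h⟩; exact hCi h
      · exact absurd h hSkj
      · exact absurd h hSki
    · rintro (⟨hadj, -, -⟩ | ⟨-, h⟩ | ⟨-, h⟩)
      · left
        refine ⟨hL.mpr (hR.mp hadj), ?_, ?_⟩
        · rintro ⟨-, h⟩; exact hSkj h
        · rintro ⟨-, h⟩; exact hSki h
      · exact absurd h hCj
      · exact absurd h hCi
  · exact main2 a b ha hb
  · -- swap roles
    rw [SimpleGraph.adj_comm]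
    rw [main2 b a hb ha]
    constructor
    · rintro (⟨hadj, h1, h2⟩ | h | h)
      · exact Or.inl ⟨hadj.symm, h2, h1⟩
      · exact Or.inr (Or.inr h)
      · exact Or.inr (Or.inl h)
    · rintro (⟨hadj, h1, h2⟩ | h | h)
      · exact Or.inl ⟨hadj.symm, h2, h1⟩
      · exact Or.inr (Or.inr h)
      · exact Or.inr (Or.inl h)
  · -- both off the path
    rw [st.sigma_fix ha, st.sigma_fix hb, st.shift_adj]
    have hau : a ≠ st.u := fun h => ha (h ▸ husupp)
    have hav : a ≠ st.v := fun h => ha (h ▸ hvsupp)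
    have hbu : b ≠ st.u := fun h => hb (h ▸ husupp)
    have hbv : b ≠ st.v := fun h => hb (h ▸ hvsupp)
    constructor
    · rintro (⟨hadj, -, -⟩ | ⟨h, -⟩ | ⟨h, -⟩)
      · left
        refine ⟨hadj, ?_, ?_⟩
        · rintro ⟨h, -⟩; exact hau h
        · rintro ⟨h, -⟩; exact hbu h
      · exact absurd h hau
      · exact absurd h hbu
    · rintro (⟨hadj, -, -⟩ | ⟨h, -⟩ | ⟨h, -⟩)
      · left
        refine ⟨hadj, ?_, ?_⟩
        · rintro ⟨h, -⟩; exact hav h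
        · rintro ⟨h, -⟩; exact hbv h
      · exact absurd h hav
      · exact absurd h hbv

lemma v_not_mem_Cset : st.v ∉ st.Cset := by
  rw [st.mem_Cset]
  rintro ⟨hadj, hne⟩
  have hk1 := st.adj_uv_k_eq_one hadj
  apply hne
  rw [← st.z_k, hk1]

/-- pointwise indicator identity for the shift -/
lemma ind_shift (i j : Fin n) :
    (if (shift st.T st.u st.v st.w).Adj i j then (1:ℝ) else 0) =
    (if st.T.Adj i j then (1:ℝ) else 0)
      + (if i = st.u ∧ j ∈ st.Sset then (1:ℝ) else 0)
      + (if j = st.u ∧ i ∈ st.Sset then (1:ℝ) else 0)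
      - (if i = st.v ∧ j ∈ st.Sset then (1:ℝ) else 0)
      - (if j = st.v ∧ i ∈ st.Sset then (1:ℝ) else 0) := by
  by_cases hA1 : i = st.u ∧ j ∈ st.Sset
  · have h1 : (shift st.T st.u st.v st.w).Adj i j :=
      st.shift_adj.mpr (Or.inr (Or.inl hA1))
    have hT : ¬st.T.Adj i j := by
      rcases hA1 with ⟨rfl, hj⟩; exact st.not_adj_u_Sset hj
    have hA2 : ¬(j = st.u ∧ i ∈ st.Sset) := by
      rintro ⟨rfl, -⟩; exact st.u_not_mem_Sset hA1.2
    have hR1 : ¬(i = st.v ∧ j ∈ st.Sset) := by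
      rintro ⟨rfl, -⟩; exact st.huv hA1.1.symm
    have hR2 : ¬(j = st.v ∧ i ∈ st.Sset) := by
      rintro ⟨rfl, -⟩; exact st.v_not_mem_Sset hA1.2
    rw [if_pos h1, if_neg hT, if_pos hA1, if_neg hA2, if_neg hR1, if_neg hR2]; ring
  by_cases hA2 : j = st.u ∧ i ∈ st.Sset
  · have h1 : (shift st.T st.u st.v st.w).Adj i j :=
      st.shift_adj.mpr (Or.inr (Or.inr hA2))
    have hT : ¬st.T.Adj i j := by
      rcases hA2 with ⟨rfl, hi⟩
      intro h; exact st.not_adj_u_Sset hi h.symm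
    have hR1 : ¬(i = st.v ∧ j ∈ st.Sset) := by
      rintro ⟨rfl, -⟩; exact st.v_not_mem_Sset hA2.2
    have hR2 : ¬(j = st.v ∧ i ∈ st.Sset) := by
      rintro ⟨rfl, -⟩; exact st.huv hA2.1.symm
    rw [if_pos h1, if_neg hT, if_neg hA1, if_pos hA2, if_neg hR1, if_neg hR2]; ring
  by_cases hR1 : i = st.v ∧ j ∈ st.Sset
  · have hT : st.T.Adj i j := by
      rcases hR1 with ⟨rfl, hj⟩; exact (st.mem_Sset.mp hj).1
    have h1 : ¬(shift st.T st.u st.v st.w).Adj i j := by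
      rw [st.shift_adj]
      rintro (⟨-, h, -⟩ | h | h)
      · exact h hR1
      · exact hA1 h
      · exact hA2 h
    have hR2 : ¬(j = st.v ∧ i ∈ st.Sset) := by
      rintro ⟨rfl, -⟩; exact st.v_not_mem_Sset hR1.2
    rw [if_neg h1, if_pos hT, if_neg hA1, if_neg hA2, if_pos hR1, if_neg hR2]; ring
  by_cases hR2 : j = st.v ∧ i ∈ st.Sset
  · have hT : st.T.Adj i j := by
      rcases hR2 with ⟨rfl, hi⟩
      exact (st.mem_Sset.mp hi).1.symm
    have h1 : ¬(shift st.T st.u st.v st.w).Adj i j := by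
      rw [st.shift_adj]
      rintro (⟨-, -, h⟩ | h | h)
      · exact h hR2
      · exact hA1 h
      · exact hA2 h
    rw [if_neg h1, if_pos hT, if_neg hA1, if_neg hA2, if_neg hR1, if_pos hR2]; ring
  · have hiff : (shift st.T st.u st.v st.w).Adj i j ↔ st.T.Adj i j := by
      rw [st.shift_adj]
      constructor
      · rintro (⟨h, -, -⟩ | h | h)
        · exact h
        · exact absurd h hA1
        · exact absurd h hA2
      · intro h; exact Or.inl ⟨h, hR1, hR2⟩
    by_cases hT : st.T.Adj i j
    · rw [if_pos (hiff.mpr hT), if_pos hT, if_neg hA1, if_neg hA2, if_neg hR1, if_neg hR2]; ring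
    · rw [if_neg (fun h => hT (hiff.mp h)), if_neg hT, if_neg hA1, if_neg hA2,
        if_neg hR1, if_neg hR2]; ring

/-- pointwise indicator identity for the shift conjugated by the path reversal -/
lemma ind_shift_sigma (i j : Fin n) :
    (if (shift st.T st.u st.v st.w).Adj (st.sigma i) (st.sigma j) then (1:ℝ) else 0) =
    (if st.T.Adj i j then (1:ℝ) else 0)
      + (if i = st.v ∧ j ∈ st.Cset then (1:ℝ) else 0)
      + (if j = st.v ∧ i ∈ st.Cset then (1:ℝ) else 0)
      - (if i = st.u ∧ j ∈ st.Cset then (1:ℝ) else 0)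
      - (if j = st.u ∧ i ∈ st.Cset then (1:ℝ) else 0) := by
  by_cases hA1 : i = st.v ∧ j ∈ st.Cset
  · have h1 : (shift st.T st.u st.v st.w).Adj (st.sigma i) (st.sigma j) :=
      st.shift_adj_sigma.mpr (Or.inr (Or.inl hA1))
    have hT : ¬st.T.Adj i j := by
      rcases hA1 with ⟨rfl, hj⟩; exact st.not_adj_v_Cset hj
    have hA2 : ¬(j = st.v ∧ i ∈ st.Cset) := by
      rintro ⟨rfl, -⟩; exact st.v_not_mem_Cset hA1.2
    have hR1 : ¬(i = st.u ∧ j ∈ st.Cset) := by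
      rintro ⟨rfl, -⟩; exact st.huv hA1.1
    have hR2 : ¬(j = st.u ∧ i ∈ st.Cset) := by
      rintro ⟨rfl, -⟩; exact st.u_not_mem_Cset hA1.2
    rw [if_pos h1, if_neg hT, if_pos hA1, if_neg hA2, if_neg hR1, if_neg hR2]; ring
  by_cases hA2 : j = st.v ∧ i ∈ st.Cset
  · have h1 : (shift st.T st.u st.v st.w).Adj (st.sigma i) (st.sigma j) :=
      st.shift_adj_sigma.mpr (Or.inr (Or.inr hA2))
    have hT : ¬st.T.Adj i j := by
      rcases hA2 with ⟨rfl, hi⟩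
      intro h; exact st.not_adj_v_Cset hi h.symm
    have hR1 : ¬(i = st.u ∧ j ∈ st.Cset) := by
      rintro ⟨rfl, -⟩; exact st.u_not_mem_Cset hA2.2
    have hR2 : ¬(j = st.u ∧ i ∈ st.Cset) := by
      rintro ⟨rfl, -⟩; exact st.huv hA2.1
    rw [if_pos h1, if_neg hT, if_neg hA1, if_pos hA2, if_neg hR1, if_neg hR2]; ring
  by_cases hR1 : i = st.u ∧ j ∈ st.Cset
  · have hT : st.T.Adj i j := by
      rcases hR1 with ⟨rfl, hj⟩; exact (st.mem_Cset.mp hj).1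
    have h1 : ¬(shift st.T st.u st.v st.w).Adj (st.sigma i) (st.sigma j) := by
      rw [st.shift_adj_sigma]
      rintro (⟨-, h, -⟩ | h | h)
      · exact h hR1
      · exact hA1 h
      · exact hA2 h
    have hR2 : ¬(j = st.u ∧ i ∈ st.Cset) := by
      rintro ⟨rfl, -⟩; exact st.u_not_mem_Cset hR1.2
    rw [if_neg h1, if_pos hT, if_neg hA1, if_neg hA2, if_pos hR1, if_neg hR2]; ring
  by_cases hR2 : j = st.u ∧ i ∈ st.Cset
  · have hT : st.T.Adj i j := by
      rcases hR2 with ⟨rfl, hi⟩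
      exact (st.mem_Cset.mp hi).1.symm
    have h1 : ¬(shift st.T st.u st.v st.w).Adj (st.sigma i) (st.sigma j) := by
      rw [st.shift_adj_sigma]
      rintro (⟨-, -, h⟩ | h | h)
      · exact h hR2
      · exact hA1 h
      · exact hA2 h
    rw [if_neg h1, if_pos hT, if_neg hA1, if_neg hA2, if_neg hR1, if_pos hR2]; ring
  · have hiff : (shift st.T st.u st.v st.w).Adj (st.sigma i) (st.sigma j) ↔ st.T.Adj i j := by
      rw [st.shift_adj_sigma]
      constructor
      · rintro (⟨h, -, -⟩ | h | h)
        · exact h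
        · exact absurd h hA1
        · exact absurd h hA2
      · intro h; exact Or.inl ⟨h, hR1, hR2⟩
    by_cases hT : st.T.Adj i j
    · rw [if_pos (hiff.mpr hT), if_pos hT, if_neg hA1, if_neg hA2, if_neg hR1, if_neg hR2]; ring
    · rw [if_neg (fun h => hT (hiff.mp h)), if_neg hT, if_neg hA1, if_neg hA2,
        if_neg hR1, if_neg hR2]; ring

section MatrixEntries

lemma distM_diag (G : SimpleGraph (Fin n)) (i : Fin n) : distM G i i = 0 := by
  simp [distM, SimpleGraph.dist_self]

lemma distM_symm (G : SimpleGraph (Fin n)) : (distM G)ᵀ = distM G := by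
  ext i j
  simp [distM, Matrix.transpose_apply, SimpleGraph.dist_comm]

lemma distM_nonneg (G : SimpleGraph (Fin n)) (i j : Fin n) : 0 ≤ distM G i j := by
  simp [distM]

lemma entry_T {i j : Fin n} (hij : i ≠ j) :
    distM st.Tᶜ i j = 1 + (if st.T.Adj i j then (1:ℝ) else 0) := by
  rw [distM]
  rw [st.dist_complT hij]
  by_cases h : st.T.Adj i j <;> simp [h] <;> norm_num

lemma entry_T_pos {i j : Fin n} (hij : i ≠ j) : 0 < distM st.Tᶜ i j := by
  rw [st.entry_T hij]
  by_cases h : st.T.Adj i j <;> simp [h] <;> norm_num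

lemma entry_T1_ge {i j : Fin n} (hij : i ≠ j) :
    1 + (if (shift st.T st.u st.v st.w).Adj i j then (1:ℝ) else 0) ≤
      distM (shift st.T st.u st.v st.w)ᶜ i j := by
  by_cases h : (shift st.T st.u st.v st.w).Adj i j
  · rw [if_pos h]
    have := st.dist_shift_ge h
    rw [distM]
    norm_num
    exact_mod_cast this
  · rw [if_neg h, distM, st.dist_shift_eq_one hij h]
    norm_num

lemma entry_T1_v_row (j : Fin n) :
    distM (shift st.T st.u st.v st.w)ᶜ st.v j =
      (if j = st.v then (0:ℝ) else 1) + (if j = st.w then (1:ℝ) else 0) := by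
  have hwv : st.w ≠ st.v := st.hwv.ne
  by_cases hjv : j = st.v
  · subst hjv
    rw [if_pos rfl, if_neg (fun h => hwv h.symm), distM_diag]
    norm_num
  by_cases hjw : j = st.w
  · subst hjw
    rw [if_neg hjv, if_pos rfl, distM, st.dist_shift_vw]
    norm_num
  · rw [if_neg hjv, if_neg hjw, distM,
      st.dist_shift_eq_one (fun h => hjv h.symm)
        (fun h => hjw (st.shift_adj_v.mp h))]
    norm_num

lemma entry_T_v_row (j : Fin n) :
    distM st.Tᶜ st.v j =
      (if j = st.v then (0:ℝ) else 1)
      + (if j = st.w then (1:ℝ) else 0) + (if j ∈ st.Sset then (1:ℝ) else 0) := by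
  have hwv : st.w ≠ st.v := st.hwv.ne
  by_cases hjv : j = st.v
  · subst hjv
    rw [if_pos rfl, if_neg (fun h => hwv h.symm),
      if_neg st.v_not_mem_Sset, distM_diag]
    norm_num
  · rw [st.entry_T (fun h => hjv h.symm), if_neg hjv]
    have : (if st.T.Adj st.v j then (1:ℝ) else 0) =
        (if j = st.w then (1:ℝ) else 0) + (if j ∈ st.Sset then (1:ℝ) else 0) := by
      by_cases hjw : j = st.w
      · rw [if_pos hjw, if_pos (by rw [hjw]; exact st.hwv.symm),
          if_neg (by rw [hjw]; exact st.w_not_mem_Sset)]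
        norm_num
      · by_cases hjS : j ∈ st.Sset
        · rw [if_pos hjS, if_pos (st.mem_Sset.mp hjS).1, if_neg hjw]; norm_num
        · rw [if_neg hjw, if_neg hjS, if_neg (fun h => by
            rcases (st.adj_v_iff.mp h) with h' | h'
            · exact hjw h'
            · exact hjS h')]
          norm_num
    rw [this]; ring

lemma entry_T_u_row (j : Fin n) :
    distM st.Tᶜ st.u j =
      (if j = st.u then (0:ℝ) else 1)
      + (if j = st.z 1 then (1:ℝ) else 0) + (if j ∈ st.Cset then (1:ℝ) else 0) := by
  have hz1u : st.z 1 ≠ st.u := st.adj_u_z1.ne'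
  have hz1C : st.z 1 ∉ st.Cset := by
    rw [st.mem_Cset]; rintro ⟨-, h⟩; exact h rfl
  by_cases hju : j = st.u
  · subst hju
    rw [if_pos rfl, if_neg (fun h => hz1u h.symm),
      if_neg st.u_not_mem_Cset, distM_diag]
    norm_num
  · rw [st.entry_T (fun h => hju h.symm), if_neg hju]
    have : (if st.T.Adj st.u j then (1:ℝ) else 0) =
        (if j = st.z 1 then (1:ℝ) else 0) + (if j ∈ st.Cset then (1:ℝ) else 0) := by
      by_cases hjz : j = st.z 1
      · rw [if_pos hjz, if_pos (by rw [hjz]; exact st.adj_u_z1),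
          if_neg (by rw [hjz]; exact hz1C)]
        norm_num
      · by_cases hjC : j ∈ st.Cset
        · rw [if_pos hjC, if_pos (st.mem_Cset.mp hjC).1, if_neg hjz]; norm_num
        · rw [if_neg hjz, if_neg hjC, if_neg (fun h => by
            rcases (st.adj_u_iff.mp h) with h' | h'
            · exact hjz h'
            · exact hjC h')]
          norm_num
    rw [this]; ring

end MatrixEntries

section Rows
variable (q : Fin n → ℝ)

lemma row_sum_base (a : Fin n) :
    ∑ j, (if j = a then (0:ℝ) else 1) * q j = (∑ j, q j) - q a := by
  have : ∀ j : Fin n, (if j = a then (0:ℝ) else 1) * q j = q j - (if j = a then q j else 0) := by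
    intro j; by_cases h : j = a <;> simp [h]
  rw [Finset.sum_congr rfl (fun j _ => this j), Finset.sum_sub_distrib,
    Finset.sum_ite_eq' Finset.univ a q]
  simp

lemma row_sum_single (a : Fin n) :
    ∑ j, (if j = a then (1:ℝ) else 0) * q j = q a := by
  have : ∀ j : Fin n, (if j = a then (1:ℝ) else 0) * q j = (if j = a then q j else 0) := by
    intro j; by_cases h : j = a <;> simp [h]
  rw [Finset.sum_congr rfl (fun j _ => this j), Finset.sum_ite_eq' Finset.univ a q]
  simp

lemma row_sum_mem (F : Finset (Fin n)) :
    ∑ j, (if j ∈ F then (1:ℝ) else 0) * q j = ∑ j ∈ F, q j := by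
  have : ∀ j : Fin n, (if j ∈ F then (1:ℝ) else 0) * q j = (if j ∈ F then q j else 0) := by
    intro j; by_cases h : j ∈ F <;> simp [h]
  rw [Finset.sum_congr rfl (fun j _ => this j), Finset.sum_ite_mem, Finset.univ_inter]

lemma rowD1_v :
    ((distM (shift st.T st.u st.v st.w)ᶜ).mulVec q) st.v
      = (∑ j, q j) - q st.v + q st.w := by
  rw [Matrix.mulVec, dotProduct]
  rw [Finset.sum_congr rfl (fun j _ => by rw [st.entry_T1_v_row j, add_mul])]
  rw [Finset.sum_add_distrib, row_sum_base, row_sum_single]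

lemma rowD_v :
    ((distM st.Tᶜ).mulVec q) st.v
      = (∑ j, q j) - q st.v + q st.w + ∑ j ∈ st.Sset, q j := by
  rw [Matrix.mulVec, dotProduct]
  rw [Finset.sum_congr rfl (fun j _ => by rw [st.entry_T_v_row j, add_mul, add_mul])]
  rw [Finset.sum_add_distrib, Finset.sum_add_distrib, row_sum_base, row_sum_single, row_sum_mem]

lemma rowD_u :
    ((distM st.Tᶜ).mulVec q) st.u
      = (∑ j, q j) - q st.u + q (st.z 1) + ∑ j ∈ st.Cset, q j := by
  rw [Matrix.mulVec, dotProduct]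
  rw [Finset.sum_congr rfl (fun j _ => by rw [st.entry_T_u_row j, add_mul, add_mul])]
  rw [Finset.sum_add_distrib, Finset.sum_add_distrib, row_sum_base, row_sum_single, row_sum_mem]

end Rows

section Quad
variable (x : Fin n → ℝ)

def quadS (M : Matrix (Fin n) (Fin n) ℝ) (x : Fin n → ℝ) : ℝ := ∑ i, ∑ j, M i j * x i * x j

def qbase (x : Fin n → ℝ) : ℝ := ∑ i, ∑ j, (if i = j then (0:ℝ) else 1) * x i * x j

def qadj (G : SimpleGraph (Fin n)) (x : Fin n → ℝ) : ℝ :=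
  ∑ i, ∑ j, (if G.Adj i j then (1:ℝ) else 0) * x i * x j

def qsig (x : Fin n → ℝ) : ℝ :=
  ∑ i, ∑ j, (if (shift st.T st.u st.v st.w).Adj (st.sigma i) (st.sigma j) then (1:ℝ) else 0)
    * x i * x j

lemma quad_T : quadS (distM st.Tᶜ) x = qbase x + qadj st.T x := by
  rw [quadS, qbase, qadj, ← Finset.sum_add_distrib]
  apply Finset.sum_congr rfl; intro i _
  rw [← Finset.sum_add_distrib]
  apply Finset.sum_congr rfl; intro j _
  by_cases hij : i = j
  · subst hij
    rw [distM_diag, if_pos rfl, if_neg (st.T.irrefl)]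
    ring
  · rw [st.entry_T hij, if_neg hij]
    ring

lemma quad_T1_ge (hx : ∀ i, 0 ≤ x i) :
    qbase x + qadj (shift st.T st.u st.v st.w) x ≤
      quadS (distM (shift st.T st.u st.v st.w)ᶜ) x := by
  rw [quadS, qbase, qadj, ← Finset.sum_add_distrib]
  apply Finset.sum_le_sum; intro i _
  rw [← Finset.sum_add_distrib]
  apply Finset.sum_le_sum; intro j _
  by_cases hij : i = j
  · subst hij
    rw [distM_diag, if_pos rfl, if_neg ((shift st.T st.u st.v st.w).irrefl)]
    ring_nf
    exact le_refl _
  · have h := st.entry_T1_ge hij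
    have hxx : 0 ≤ x i * x j := mul_nonneg (hx i) (hx j)
    rw [if_neg hij]
    calc (1:ℝ) * x i * x j
          + (if (shift st.T st.u st.v st.w).Adj i j then (1:ℝ) else 0) * x i * x j
        = (1 + (if (shift st.T st.u st.v st.w).Adj i j then (1:ℝ) else 0)) * (x i * x j) := by
          ring
      _ ≤ distM (shift st.T st.u st.v st.w)ᶜ i j * (x i * x j) :=
          mul_le_mul_of_nonneg_right h hxx
      _ = distM (shift st.T st.u st.v st.w)ᶜ i j * x i * x j := by ring

lemma quad_T1_sigma (hx : ∀ i, 0 ≤ x i) :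
    qbase x + st.qsig x ≤
      quadS (distM (shift st.T st.u st.v st.w)ᶜ) (fun i => x (st.sigma i)) := by
  set D1 := distM (shift st.T st.u st.v st.w)ᶜ with hD1
  set y : Fin n → ℝ := fun i => x (st.sigma i) with hy
  have hyy : ∀ i, y (st.sigma i) = x i := fun i => by
    simp only [hy]; rw [st.sigma_invol i]
  have hre : quadS D1 y = ∑ i, ∑ j, D1 (st.sigma i) (st.sigma j) * x i * x j := by
    rw [quadS]
    rw [← Equiv.sum_comp st.sigmaE (fun i => ∑ j, D1 i j * y i * y j)]
    apply Finset.sum_congr rfl; intro i _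
    rw [← Equiv.sum_comp st.sigmaE (fun j => D1 (st.sigmaE i) j * y (st.sigmaE i) * y j)]
    apply Finset.sum_congr rfl; intro j _
    simp only [st.sigmaE_apply]
    rw [hyy i, hyy j]
  rw [hre, qbase, qsig, ← Finset.sum_add_distrib]
  apply Finset.sum_le_sum; intro i _
  rw [← Finset.sum_add_distrib]
  apply Finset.sum_le_sum; intro j _
  by_cases hij : i = j
  · subst hij
    rw [if_pos rfl, if_neg ((shift st.T st.u st.v st.w).irrefl), hD1, distM_diag]
    simp
  · have hsij : st.sigma i ≠ st.sigma j := fun h => hij (st.sigma_inj h)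
    have h := st.entry_T1_ge hsij
    have hxx : 0 ≤ x i * x j := mul_nonneg (hx i) (hx j)
    rw [if_neg hij]
    calc (1:ℝ) * x i * x j
          + (if (shift st.T st.u st.v st.w).Adj (st.sigma i) (st.sigma j) then (1:ℝ) else 0)
            * x i * x j
        = (1 + (if (shift st.T st.u st.v st.w).Adj (st.sigma i) (st.sigma j) then (1:ℝ) else 0))
            * (x i * x j) := by ring
      _ ≤ D1 (st.sigma i) (st.sigma j) * (x i * x j) := mul_le_mul_of_nonneg_right h hxx
      _ = D1 (st.sigma i) (st.sigma j) * x i * x j := by ring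

lemma pair_sum1 (a : Fin n) (F : Finset (Fin n)) :
    ∑ i, ∑ j, (if i = a ∧ j ∈ F then (1:ℝ) else 0) * x i * x j = x a * ∑ j ∈ F, x j := by
  have key : ∀ i j : Fin n, (if i = a ∧ j ∈ F then (1:ℝ) else 0) * x i * x j
      = ((if i = a then (1:ℝ) else 0) * x i) * ((if j ∈ F then (1:ℝ) else 0) * x j) := by
    intro i j
    by_cases h : i = a <;> by_cases h' : j ∈ F <;> simp [h, h']
  calc ∑ i, ∑ j, (if i = a ∧ j ∈ F then (1:ℝ) else 0) * x i * x j
      = ∑ i, ((if i = a then (1:ℝ) else 0) * x i) * ∑ j, ((if j ∈ F then (1:ℝ) else 0) * x j) := by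
        apply Finset.sum_congr rfl; intro i _
        rw [Finset.mul_sum]
        exact Finset.sum_congr rfl fun j _ => key i j
    _ = (∑ i, (if i = a then (1:ℝ) else 0) * x i) * ∑ j, ((if j ∈ F then (1:ℝ) else 0) * x j) := by
        rw [Finset.sum_mul]
    _ = x a * ∑ j ∈ F, x j := by rw [row_sum_single, row_sum_mem]

lemma pair_sum2 (a : Fin n) (F : Finset (Fin n)) :
    ∑ i, ∑ j, (if j = a ∧ i ∈ F then (1:ℝ) else 0) * x i * x j = x a * ∑ j ∈ F, x j := by
  rw [Finset.sum_comm]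
  calc ∑ j, ∑ i, (if j = a ∧ i ∈ F then (1:ℝ) else 0) * x i * x j
      = ∑ j, ∑ i, (if j = a ∧ i ∈ F then (1:ℝ) else 0) * x j * x i := by
        apply Finset.sum_congr rfl; intro j _
        apply Finset.sum_congr rfl; intro i _
        ring
    _ = x a * ∑ j ∈ F, x j := pair_sum1 x a F

lemma qadj_shift :
    qadj (shift st.T st.u st.v st.w) x
      = qadj st.T x + 2 * (x st.u - x st.v) * ∑ j ∈ st.Sset, x j := by
  have expand : qadj (shift st.T st.u st.v st.w) x
      = ∑ i, ∑ j, ((if st.T.Adj i j then (1:ℝ) else 0) * x i * x j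
          + (if i = st.u ∧ j ∈ st.Sset then (1:ℝ) else 0) * x i * x j
          + (if j = st.u ∧ i ∈ st.Sset then (1:ℝ) else 0) * x i * x j
          - (if i = st.v ∧ j ∈ st.Sset then (1:ℝ) else 0) * x i * x j
          - (if j = st.v ∧ i ∈ st.Sset then (1:ℝ) else 0) * x i * x j) := by
    rw [qadj]
    apply Finset.sum_congr rfl; intro i _
    apply Finset.sum_congr rfl; intro j _
    rw [st.ind_shift i j]; ring
  rw [expand]
  simp only [Finset.sum_add_distrib, Finset.sum_sub_distrib]
  rw [pair_sum1, pair_sum2, pair_sum1, pair_sum2, qadj]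
  ring

lemma qsig_eq :
    st.qsig x = qadj st.T x + 2 * (x st.v - x st.u) * ∑ j ∈ st.Cset, x j := by
  have expand : st.qsig x
      = ∑ i, ∑ j, ((if st.T.Adj i j then (1:ℝ) else 0) * x i * x j
          + (if i = st.v ∧ j ∈ st.Cset then (1:ℝ) else 0) * x i * x j
          + (if j = st.v ∧ i ∈ st.Cset then (1:ℝ) else 0) * x i * x j
          - (if i = st.u ∧ j ∈ st.Cset then (1:ℝ) else 0) * x i * x j
          - (if j = st.u ∧ i ∈ st.Cset then (1:ℝ) else 0) * x i * x j) := by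
    rw [qsig]
    apply Finset.sum_congr rfl; intro i _
    apply Finset.sum_congr rfl; intro j _
    rw [st.ind_shift_sigma i j]; ring
  rw [expand]
  simp only [Finset.sum_add_distrib, Finset.sum_sub_distrib]
  rw [pair_sum1, pair_sum2, pair_sum1, pair_sum2, qadj]
  ring

end Quad

end Setup
end GTSaux2


lemma gdiam_witness {n : ℕ} (T : SimpleGraph (Fin n)) (hd : 4 ≤ gdiam T) :
    ∃ x y : Fin n, 4 ≤ T.dist x y := by
  classical
  have hfin : {d : ℕ | ∃ x y : Fin n, T.dist x y = d}.Finite := by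
    apply (Set.finite_range (fun p : Fin n × Fin n => T.dist p.1 p.2)).subset
    rintro d ⟨x, y, h⟩
    exact ⟨(x, y), h⟩
  by_cases hne : {d : ℕ | ∃ x y : Fin n, T.dist x y = d}.Nonempty
  · have hmem := Nat.sSup_mem hne hfin.bddAbove
    obtain ⟨x, y, hxy⟩ := hmem
    refine ⟨x, y, ?_⟩
    simp only [gdiam] at hd
    omega
  · exfalso
    rw [Set.not_nonempty_iff_eq_empty] at hne
    simp only [gdiam, hne] at hd
    rw [csSup_empty] at hd
    simp at hd


theorem stmt_4 (n : ℕ) (T T₁ : SimpleGraph (Fin n)) (hT : T.IsTree)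
    (hd : 4 ≤ gdiam T) (h : IsProperGTS T T₁) :
    lam1 (distM T₁ᶜ) > lam1 (distM Tᶜ) := by
  classical
  obtain ⟨u, v, w, p, huv, hp, hwv, hwmem, hdeg2, hdu, hdv, hT1⟩ := h
  obtain ⟨x0, y0, hd4⟩ := gdiam_witness T hd
  subst hT1
  set st : GTSaux2.Setup n :=
    ⟨T, u, v, w, p, hT, huv, hp, hwv, hwmem, hdeg2, hdu, hdv, x0, y0, hd4⟩ with hst
  show lam1 (distM (shift st.T st.u st.v st.w)ᶜ) > lam1 (distM st.Tᶜ)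
  have hn : 0 < n := u.pos
  set D : Matrix (Fin n) (Fin n) ℝ := distM st.Tᶜ with hD
  set D1 : Matrix (Fin n) (Fin n) ℝ := distM (shift st.T st.u st.v st.w)ᶜ with hD1
  have hDsym : Dᵀ = D := GTSaux2.Setup.distM_symm _
  have hD1sym : D1ᵀ = D1 := GTSaux2.Setup.distM_symm _
  obtain ⟨x, hxsph, hxpos, hxeig⟩ := GTSaux.exists_perron hn D hDsym
    (fun i j => GTSaux2.Setup.distM_nonneg _ i j)
    (fun i j hij => st.entry_T_pos hij)
  set lam := lam1 D with hlam
  have hx2 : ∑ i, x i ^ 2 = 1 := hxsph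
  have hquadx : GTSaux.quadF D x = lam := by
    rw [GTSaux.quadF_of_eig D hxeig, hx2, mul_one]
  have hxnn : ∀ i, 0 ≤ x i := fun i => (hxpos i).le
  have hqq : ∀ (M : Matrix (Fin n) (Fin n) ℝ) (z : Fin n → ℝ),
      GTSaux.quadF M z = GTSaux2.Setup.quadS M z := by
    intro M z; rw [GTSaux.quadF_eq]; rfl
  by_contra hnot
  push_neg at hnot
  have hS0 : 0 < ∑ j ∈ st.Sset, x j := by
    obtain ⟨b, hb⟩ := st.Sset_nonempty
    exact Finset.sum_pos (fun i _ => hxpos i) ⟨b, hb⟩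
  have hC0 : 0 < ∑ j ∈ st.Cset, x j := by
    obtain ⟨c, hc⟩ := st.Cset_nonempty
    exact Finset.sum_pos (fun i _ => hxpos i) ⟨c, hc⟩
  have hquadDsplit : GTSaux2.Setup.quadS D x
      = GTSaux2.Setup.qbase x + GTSaux2.Setup.qadj st.T x := st.quad_T x
  rcases le_total (x st.v) (x st.u) with hcase | hcase
  · -- Case A : x u ≥ x v, test vector x itself
    have h1 : lam + 2 * (x st.u - x st.v) * ∑ j ∈ st.Sset, x j ≤ GTSaux.quadF D1 x := by
      have hA := st.quad_T1_ge x hxnn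
      rw [st.qadj_shift x] at hA
      rw [hqq]
      calc lam + 2 * (x st.u - x st.v) * ∑ j ∈ st.Sset, x j
          = GTSaux2.Setup.quadS D x + 2 * (x st.u - x st.v) * ∑ j ∈ st.Sset, x j := by
            rw [← hqq, hquadx]
        _ = GTSaux2.Setup.qbase x + (GTSaux2.Setup.qadj st.T x
              + 2 * (x st.u - x st.v) * ∑ j ∈ st.Sset, x j) := by
            rw [hquadDsplit]; ring
        _ ≤ GTSaux2.Setup.quadS D1 x := hA
    have hge : lam ≤ GTSaux.quadF D1 x := by nlinarith [hS0]
    have hle2 : GTSaux.quadF D1 x ≤ lam1 D1 := GTSaux.rayleigh_le_lam1 hn D1 hD1sym hxsph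
    have heq1 : GTSaux.quadF D1 x = lam1 D1 := by linarith
    have heq2 : lam1 D1 = lam := by linarith
    have heig1 : D1.mulVec x = lam1 D1 • x := GTSaux.eig_of_rayleigh_eq hn D1 hD1sym hxsph heq1
    have hrow1 : ((D1.mulVec x) st.v) = (∑ j, x j) - x st.v + x st.w := st.rowD1_v x
    have hrow2 : ((D.mulVec x) st.v)
        = (∑ j, x j) - x st.v + x st.w + ∑ j ∈ st.Sset, x j := st.rowD_v x
    have e1 : (D1.mulVec x) st.v = lam * x st.v := by
      rw [heig1, heq2]; simp
    have e2 : (D.mulVec x) st.v = lam * x st.v := by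
      rw [hxeig]; simp [hlam]
    rw [e1] at hrow1
    rw [e2] at hrow2
    linarith
  · -- Case B : x v ≥ x u, test vector x ∘ σ
    set y : Fin n → ℝ := fun i => x (st.sigma i) with hy
    have hsumy : ∑ i, y i = ∑ i, x i := by
      rw [hy]
      exact Equiv.sum_comp st.sigmaE (fun i => x i)
    have hysph : y ∈ GTSaux.sph n := by
      show ∑ i, y i ^ 2 = 1
      rw [hy, ← hx2]
      exact Equiv.sum_comp st.sigmaE (fun i => x i ^ 2)
    have hynn : ∀ i, 0 ≤ y i := fun i => (hxpos _).le
    have h1 : lam + 2 * (x st.v - x st.u) * ∑ j ∈ st.Cset, x j ≤ GTSaux.quadF D1 y := by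
      have hA := st.quad_T1_sigma x hxnn
      rw [st.qsig_eq x] at hA
      rw [hqq]
      calc lam + 2 * (x st.v - x st.u) * ∑ j ∈ st.Cset, x j
          = GTSaux2.Setup.quadS D x + 2 * (x st.v - x st.u) * ∑ j ∈ st.Cset, x j := by
            rw [← hqq, hquadx]
        _ = GTSaux2.Setup.qbase x + (GTSaux2.Setup.qadj st.T x
              + 2 * (x st.v - x st.u) * ∑ j ∈ st.Cset, x j) := by
            rw [hquadDsplit]; ring
        _ ≤ GTSaux2.Setup.quadS D1 y := hA
    have hge : lam ≤ GTSaux.quadF D1 y := by nlinarith [hC0]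
    have hle2 : GTSaux.quadF D1 y ≤ lam1 D1 := GTSaux.rayleigh_le_lam1 hn D1 hD1sym hysph
    have heq1 : GTSaux.quadF D1 y = lam1 D1 := by linarith
    have heq2 : lam1 D1 = lam := by linarith
    have heig1 : D1.mulVec y = lam1 D1 • y := GTSaux.eig_of_rayleigh_eq hn D1 hD1sym hysph heq1
    have hrow1 : ((D1.mulVec y) st.v) = (∑ j, y j) - y st.v + y st.w := st.rowD1_v y
    have hyv : y st.v = x st.u := by rw [hy]; simp only; rw [st.sigma_v]
    have hyw : y st.w = x (st.z 1) := by rw [hy]; simp only; rw [st.sigma_w]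
    have hrow2 : ((D.mulVec x) st.u)
        = (∑ j, x j) - x st.u + x (st.z 1) + ∑ j ∈ st.Cset, x j := st.rowD_u x
    have e1 : (D1.mulVec y) st.v = lam * x st.u := by
      rw [heig1, heq2]; simp [hyv]
    have e2 : (D.mulVec x) st.u = lam * x st.u := by
      rw [hxeig]; simp [hlam]
    rw [e1] at hrow1
    rw [e2] at hrow2
    rw [hsumy, hyv, hyw] at hrow1
    linarith

end
end

section
/- Every tree on n vertices that is not a path can be obtained from some tree by a proper generalized tree shift; equivalently, every tree different from the path is the image of a proper generalized tree shift. -/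
open SimpleGraph Matrix BigOperators Finset

noncomputable section

section AuxGTS

variable {n : ℕ}

private lemma deg_eq_degree (G : SimpleGraph (Fin n)) [DecidableRel G.Adj] (x : Fin n) :
    deg G x = G.degree x := by
  rw [deg, SimpleGraph.degree]
  exact Set.ncard_eq_toFinset_card' _

private lemma getVert_injOn' {G : SimpleGraph (Fin n)} {u v : Fin n} (p : G.Walk u v)
    (hp : p.IsPath) : ∀ i, i ≤ p.length → ∀ j, j ≤ p.length →
      p.getVert i = p.getVert j → i = j := by
  induction p with
  | nil => intro i hi j hj _; simp only [SimpleGraph.Walk.length_nil, Nat.le_zero] at hi hj; omega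
  | @cons a b c h q ih =>
    have hu : a ∉ q.support := ((SimpleGraph.Walk.cons_isPath_iff _ _).mp hp).2
    have hq : q.IsPath := hp.of_cons
    intro i hi j hj hij
    simp only [SimpleGraph.Walk.length_cons] at hi hj
    match i, j with
    | 0, 0 => rfl
    | 0, (k+1) =>
      exfalso; apply hu
      rw [SimpleGraph.Walk.mem_support_iff_exists_getVert]
      refine ⟨k, ?_, by omega⟩
      rw [← SimpleGraph.Walk.getVert_cons_succ q h, ← hij, SimpleGraph.Walk.getVert_zero]
    | (k+1), 0 =>
      exfalso; apply hu
      rw [SimpleGraph.Walk.mem_support_iff_exists_getVert]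
      refine ⟨k, ?_, by omega⟩
      rw [← SimpleGraph.Walk.getVert_cons_succ q h, hij, SimpleGraph.Walk.getVert_zero]
    | (k+1), (l+1) =>
      have := ih hq k (by omega) l (by omega)
        (by rwa [SimpleGraph.Walk.getVert_cons_succ, SimpleGraph.Walk.getVert_cons_succ] at hij)
      omega

private lemma adj_eq_of_deg_one {G : SimpleGraph (Fin n)} {x a b : Fin n} (h : deg G x = 1)
    (ha : G.Adj x a) (hb : G.Adj x b) : a = b := by
  obtain ⟨c, hc⟩ := Set.ncard_eq_one.mp h
  have h1 : a ∈ G.neighborSet x := ha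
  have h2 : b ∈ G.neighborSet x := hb
  rw [hc] at h1 h2
  simp only [Set.mem_singleton_iff] at h1 h2
  rw [h1, h2]

private lemma adj_mem_pair_of_deg_two {G : SimpleGraph (Fin n)} {x a b y : Fin n}
    (h : deg G x = 2) (hab : a ≠ b) (ha : G.Adj x a) (hb : G.Adj x b) (hy : G.Adj x y) :
    y = a ∨ y = b := by
  have hsub : ({a, b} : Set (Fin n)) ⊆ G.neighborSet x := by
    intro z hz; rcases hz with rfl | hz
    · exact ha
    · simp only [Set.mem_singleton_iff] at hz; subst hz; exact hb
  have heq : ({a, b} : Set (Fin n)) = G.neighborSet x :=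
    Set.eq_of_subset_of_ncard_le hsub (by rw [Set.ncard_pair hab]; exact le_of_eq h)
      (Set.toFinite _)
  have : y ∈ ({a, b} : Set (Fin n)) := heq ▸ (hy : y ∈ G.neighborSet x)
  simpa using this

private lemma exists_other_neighbor {G : SimpleGraph (Fin n)} {x z : Fin n}
    (h : 2 ≤ deg G x) : ∃ y, G.Adj x y ∧ y ≠ z := by
  by_contra hc
  push_neg at hc
  have hsub : G.neighborSet x ⊆ {z} := by
    intro y hy; exact hc y hy
  have := Set.ncard_le_ncard hsub (Set.finite_singleton z)
  rw [Set.ncard_singleton] at this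
  rw [deg] at h
  omega

private lemma deg_pos_of_adj {G : SimpleGraph (Fin n)} {x y : Fin n} (h : G.Adj x y) :
    0 < deg G x :=
  (Set.ncard_pos (Set.toFinite _)).mpr ⟨y, h⟩

/-- If `u` is adjacent to a vertex `y` on a path starting at `u` in an acyclic graph,
then `y` is the second vertex of the path. -/
private lemma adj_start_mem_support {G : SimpleGraph (Fin n)} (hG : G.IsAcyclic)
    {u v y : Fin n} (p : G.Walk u v) (hp : p.IsPath) (hadj : G.Adj u y)
    (hy : y ∈ p.support) : p.getVert 1 = y := by
  classical
  have hq : (p.takeUntil y hy).IsPath := hp.takeUntil hy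
  have he : (SimpleGraph.Walk.cons hadj SimpleGraph.Walk.nil).IsPath := by
    simp [SimpleGraph.Walk.isPath_def, hadj.ne]
  have huniq := hG.path_unique ⟨p.takeUntil y hy, hq⟩ ⟨SimpleGraph.Walk.cons hadj SimpleGraph.Walk.nil, he⟩
  have hlen : (p.takeUntil y hy).length = 1 := by
    have := congrArg (fun q : G.Path u y => q.val.length) huniq
    simpa using this
  conv_lhs => rw [← p.take_spec hy]
  rw [SimpleGraph.Walk.getVert_append]
  rw [hlen]
  simp

end AuxGTS

section AuxGTS2

open SimpleGraph

variable {n : ℕ}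

private lemma exists_leaf {T : SimpleGraph (Fin n)} (hT : T.IsTree) (hn : 2 ≤ n) :
    ∃ v, deg T v = 1 := by
  classical
  by_contra h
  push_neg at h
  have hdeg2 : ∀ v, 2 ≤ T.degree v := by
    intro v
    have h1 : 0 < T.degree v := by
      rw [SimpleGraph.degree_pos_iff_exists_adj]
      have : Nontrivial (Fin n) := Fin.nontrivial_iff_two_le.mpr hn
      obtain ⟨w, hw⟩ := exists_ne v
      have hreach : T.Reachable v w := hT.isConnected.preconnected v w
      obtain ⟨W⟩ := hreach
      have hnil : ¬ W.Nil := by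
        intro hN
        exact hw (SimpleGraph.Walk.Nil.eq hN).symm
      exact ⟨W.getVert 1, W.adj_snd hnil⟩
    have h2 : T.degree v ≠ 1 := by
      rw [← deg_eq_degree]; exact h v
    omega
  have hsum := T.sum_degrees_eq_twice_card_edges
  have hcard := hT.card_edgeFinset
  have hle : (2 : ℕ) * n ≤ ∑ v, T.degree v := by
    calc (2:ℕ) * n = ∑ _v : Fin n, 2 := by simp [mul_comm]
    _ ≤ ∑ v, T.degree v := Finset.sum_le_sum (fun i _ => hdeg2 i)
  rw [hsum] at hle
  rw [Fintype.card_fin] at hcard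
  omega

private lemma maxpath {T : SimpleGraph (Fin n)} (hT : T.IsTree) {v : Fin n}
    (hv : deg T v = 1) :
    ∃ (u : Fin n) (p : T.Walk u v), p.IsPath ∧ 0 < p.length ∧
      (∀ x ∈ p.support, x ≠ u → x ≠ v → deg T x = 2) ∧ deg T u ≠ 2 := by
  obtain ⟨w, hw⟩ := Set.ncard_eq_one.mp hv
  have hadj : T.Adj v w := by
    have : w ∈ T.neighborSet v := by rw [hw]; rfl
    exact this
  have key : ∀ (k : ℕ) (u0 : Fin n) (p : T.Walk u0 v), p.IsPath → 0 < p.length →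
      n - p.length ≤ k → (∀ x ∈ p.support, x ≠ u0 → x ≠ v → deg T x = 2) →
      ∃ (u : Fin n) (q : T.Walk u v), q.IsPath ∧ 0 < q.length ∧
        (∀ x ∈ q.support, x ≠ u → x ≠ v → deg T x = 2) ∧ deg T u ≠ 2 := by
    intro k
    induction k with
    | zero =>
      intro u0 p hp hl hk hint
      exfalso
      have := hp.length_lt
      rw [Fintype.card_fin] at this
      omega
    | succ k ih =>
      intro u0 p hp hl hk hint
      by_cases hdeg : deg T u0 = 2
      · have hz : T.Adj u0 (p.getVert 1) := by
          have := p.adj_getVert_succ hl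
          rwa [SimpleGraph.Walk.getVert_zero] at this
        obtain ⟨y, hy, hyz⟩ := exists_other_neighbor (le_of_eq hdeg.symm) (z := p.getVert 1)
        have hys : y ∉ p.support := fun hmem =>
          hyz (adj_start_mem_support hT.2 p hp hy hmem).symm
        have hp' : (p.cons hy.symm).IsPath := hp.cons hys
        refine ih y (p.cons hy.symm) hp' (by simp) ?_ ?_
        · rw [SimpleGraph.Walk.length_cons]
          have := hp.length_lt
          rw [Fintype.card_fin] at this
          omega
        · intro x hx hxy hxv
          rw [SimpleGraph.Walk.support_cons, List.mem_cons] at hx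
          rcases hx with rfl | hx
          · exact absurd rfl hxy
          · by_cases hxu : x = u0
            · subst hxu; exact hdeg
            · exact hint x hx hxu hxv
      · exact ⟨u0, p, hp, hl, hint, hdeg⟩
  refine key n w (SimpleGraph.Walk.cons hadj.symm SimpleGraph.Walk.nil) ?_ (by simp) (by omega) ?_
  · simp [SimpleGraph.Walk.isPath_def, hadj.ne']
  · intro x hx hxw hxv
    simp only [SimpleGraph.Walk.support_cons, SimpleGraph.Walk.support_nil, List.mem_cons,
      List.mem_singleton] at hx
    rcases hx with rfl | rfl | h
    · exact absurd rfl hxw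
    · exact absurd rfl hxv
    · exact absurd h List.not_mem_nil

/-- Neighbor structure along a path between two leaves whose interior has degree 2. -/
private lemma nbr {T : SimpleGraph (Fin n)} (hTa : T.IsAcyclic) {u v : Fin n}
    (p : T.Walk u v) (hp : p.IsPath) (hl : 0 < p.length) (hu : deg T u = 1)
    (hv : deg T v = 1) (hint : ∀ x ∈ p.support, x ≠ u → x ≠ v → deg T x = 2) :
    ∀ i, i ≤ p.length → ∀ y, T.Adj (p.getVert i) y →
      (i < p.length ∧ y = p.getVert (i+1)) ∨ (0 < i ∧ y = p.getVert (i-1)) := by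
  intro i hi y hy
  have hinj := getVert_injOn' p hp
  by_cases h0 : i = 0
  · subst h0
    left
    refine ⟨hl, ?_⟩
    have h1 : T.Adj u (p.getVert 1) := by
      have := p.adj_getVert_succ hl
      rwa [SimpleGraph.Walk.getVert_zero] at this
    rw [SimpleGraph.Walk.getVert_zero] at hy
    exact adj_eq_of_deg_one hu hy h1
  · by_cases hL : i = p.length
    · subst hL
      right
      refine ⟨hl, ?_⟩
      have h1 : T.Adj v (p.getVert (p.length - 1)) := by
        have h2 := p.adj_getVert_succ (show p.length - 1 < p.length by omega)
        rw [show p.length - 1 + 1 = p.length by omega, SimpleGraph.Walk.getVert_length] at h2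
        exact h2.symm
      rw [SimpleGraph.Walk.getVert_length] at hy
      exact adj_eq_of_deg_one hv hy h1
    · -- interior
      have hi' : 0 < i ∧ i < p.length := ⟨Nat.pos_of_ne_zero h0, lt_of_le_of_ne hi hL⟩
      have ha : T.Adj (p.getVert i) (p.getVert (i-1)) := by
        have h2 := p.adj_getVert_succ (show i - 1 < p.length by omega)
        rw [show i - 1 + 1 = i by omega] at h2
        exact h2.symm
      have hb : T.Adj (p.getVert i) (p.getVert (i+1)) := p.adj_getVert_succ hi'.2
      have hne : p.getVert (i-1) ≠ p.getVert (i+1) := by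
        intro h
        have := hinj (i-1) (by omega) (i+1) (by omega) h
        omega
      have hdeg : deg T (p.getVert i) = 2 := by
        refine hint _ (SimpleGraph.Walk.mem_support_iff_exists_getVert.mpr ⟨i, rfl, hi⟩) ?_ ?_
        · intro h
          have := hinj i hi 0 (by omega) (by rw [h, SimpleGraph.Walk.getVert_zero])
          omega
        · intro h
          have := hinj i hi p.length le_rfl (by rw [h, SimpleGraph.Walk.getVert_length])
          omega
      rcases adj_mem_pair_of_deg_two hdeg hne ha hb hy with h | h
      · right; exact ⟨hi'.1, h⟩
      · left; exact ⟨hi'.2, h⟩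

private lemma support_all {T : SimpleGraph (Fin n)} (hTc : T.Connected) (hTa : T.IsAcyclic)
    {u v : Fin n} (p : T.Walk u v) (hp : p.IsPath) (hl : 0 < p.length) (hu : deg T u = 1)
    (hv : deg T v = 1) (hint : ∀ x ∈ p.support, x ≠ u → x ≠ v → deg T x = 2) :
    ∀ x, x ∈ p.support := by
  have hnbr := nbr hTa p hp hl hu hv hint
  have step : ∀ (a c : Fin n) (W : T.Walk a c), a ∈ p.support → c ∈ p.support := by
    intro a c W
    induction W with
    | nil => exact id
    | @cons a b c h q ih =>
      intro ha
      apply ih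
      obtain ⟨i, hgi, hile⟩ := SimpleGraph.Walk.mem_support_iff_exists_getVert.mp ha
      have hadj : T.Adj (p.getVert i) b := by rw [hgi]; exact h
      rcases hnbr i hile b hadj with ⟨hlt, rfl⟩ | ⟨hpos, rfl⟩
      · exact SimpleGraph.Walk.mem_support_iff_exists_getVert.mpr ⟨i+1, rfl, by omega⟩
      · exact SimpleGraph.Walk.mem_support_iff_exists_getVert.mpr ⟨i-1, rfl, by omega⟩
  intro x
  obtain ⟨W⟩ := hTc.preconnected v x
  exact step v x W p.end_mem_support

private lemma iso_path {T : SimpleGraph (Fin n)} (hT : T.IsTree)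
    (hdeg : ∀ x, deg T x ≤ 2) : Nonempty (T ≃g SimpleGraph.pathGraph n) := by
  classical
  have hne : Nonempty (Fin n) := hT.isConnected.nonempty
  have hn : 0 < n := by
    rcases hne with ⟨x⟩; exact x.pos
  rcases Nat.lt_or_ge n 2 with h2 | h2
  · -- n = 1
    have hn1 : n = 1 := by omega
    subst hn1
    refine ⟨⟨Equiv.refl _, ?_⟩⟩
    intro a b
    have hab : a = b := Subsingleton.elim a b
    subst hab
    simp only [Equiv.refl_apply]
    constructor
    · intro h; exact absurd h (SimpleGraph.irrefl _)
    · intro h; exact absurd h (SimpleGraph.irrefl _)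
  · obtain ⟨v, hv⟩ := exists_leaf hT h2
    obtain ⟨u, p, hp, hl, hint, hu2⟩ := maxpath hT hv
    have hz : T.Adj u (p.getVert 1) := by
      have := p.adj_getVert_succ hl
      rwa [SimpleGraph.Walk.getVert_zero] at this
    have hu1 : deg T u = 1 := by
      have h0 := deg_pos_of_adj hz
      have := hdeg u
      omega
    have hall := support_all hT.isConnected hT.2 p hp hl hu1 hv hint
    have hinj := getVert_injOn' p hp
    have hcard : p.length + 1 = n := by
      have hnd := hp.support_nodup
      have huniv : p.support.toFinset = Finset.univ := by
        apply Finset.eq_univ_of_forall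
        intro x
        rw [List.mem_toFinset]
        exact hall x
      have h1 := List.toFinset_card_of_nodup hnd
      rw [huniv, Finset.card_univ, Fintype.card_fin] at h1
      have h2 := SimpleGraph.Walk.length_support p
      omega
    have hfinj : Function.Injective (fun i : Fin n => p.getVert i.val) := by
      intro i j hij
      exact Fin.ext (hinj i.val (by omega) j.val (by omega) hij)
    have hfbij : Function.Bijective (fun i : Fin n => p.getVert i.val) :=
      Finite.injective_iff_bijective.mp hfinj
    have hnbr := nbr hT.2 p hp hl hu1 hv hint
    refine ⟨SimpleGraph.Iso.symm (⟨Equiv.ofBijective _ hfbij, ?_⟩ : SimpleGraph.pathGraph n ≃g T)⟩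
    intro a b
    simp only [Equiv.ofBijective_apply]
    rw [SimpleGraph.pathGraph_adj]
    constructor
    · intro hadj
      rcases hnbr a.val (by omega) _ hadj with ⟨hlt, hgb⟩ | ⟨hpos, hgb⟩
      · left
        have := hinj b.val (by omega) (a.val + 1) (by omega) hgb
        omega
      · right
        have := hinj b.val (by omega) (a.val - 1) (by omega) hgb
        omega
    · intro h
      rcases h with h | h
      · have hlt : a.val < p.length := by omega
        have := p.adj_getVert_succ hlt
        rwa [show a.val + 1 = b.val from h] at this
      · have hlt : b.val < p.length := by omega
        have := p.adj_getVert_succ hlt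
        rw [show b.val + 1 = a.val from h] at this
        exact this.symm

end AuxGTS2

theorem stmt_7 (n : ℕ) (T : SimpleGraph (Fin n)) (hT : T.IsTree)
    (hnp : ¬ Nonempty (T ≃g SimpleGraph.pathGraph n)) :
    ∃ T₀ T₁ : SimpleGraph (Fin n), T₀.IsTree ∧ IsProperGTS T₀ T₁ ∧
      Nonempty (T₁ ≃g T) := by
  classical
  obtain ⟨u0, hu0⟩ : ∃ x, 3 ≤ deg T x := by
    by_contra h
    push_neg at h
    exact hnp (iso_path hT (fun x => by have := h x; omega))
  have hn2 : 2 ≤ n := by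
    obtain ⟨y, hy⟩ : (T.neighborSet u0).Nonempty := by
      apply (Set.ncard_pos (Set.toFinite _)).mp
      show 0 < deg T u0
      omega
    have hney : u0 ≠ y := (hy : T.Adj u0 y).ne
    have := Fintype.one_lt_card_iff.mpr ⟨u0, y, hney⟩
    simp at this; omega
  obtain ⟨v, hv⟩ := exists_leaf hT hn2
  obtain ⟨u, p, hp, hl, hint, hu2⟩ := maxpath hT hv
  have hinj := getVert_injOn' p hp
  have hz : T.Adj u (p.getVert 1) := by
    have := p.adj_getVert_succ hl
    rwa [SimpleGraph.Walk.getVert_zero] at this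
  have hu1 : deg T u ≠ 1 := by
    intro h1
    have hall := support_all hT.isConnected hT.2 p hp hl h1 hv hint
    have hmem := hall u0
    by_cases h : u0 = u
    · subst h; omega
    · by_cases h' : u0 = v
      · subst h'; omega
      · have := hint u0 hmem h h'; omega
  have hu3 : 3 ≤ deg T u := by
    have := deg_pos_of_adj hz
    omega
  obtain ⟨b, hb, hbz⟩ := exists_other_neighbor (show 2 ≤ deg T u by omega) (z := p.getVert 1)
  have hbs : b ∉ p.support := fun hmem => hbz (adj_start_mem_support hT.2 p hp hb hmem).symm
  have hws : p.getVert (p.length - 1) ∈ p.support :=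
    SimpleGraph.Walk.mem_support_iff_exists_getVert.mpr ⟨p.length - 1, rfl, by omega⟩
  set w : Fin n := p.getVert (p.length - 1) with hwdef
  have hwv : T.Adj w v := by
    have h2 := p.adj_getVert_succ (show p.length - 1 < p.length by omega)
    rwa [show p.length - 1 + 1 = p.length by omega, SimpleGraph.Walk.getVert_length] at h2
  have hbv : b ≠ v := fun h => hbs (by rw [h]; exact p.end_mem_support)
  have hbu : b ≠ u := hb.ne'
  have hbw : b ≠ w := fun h => hbs (by rw [h]; exact hws)
  have huv : u ≠ v := by
    intro h
    have := hinj 0 (by omega) p.length le_rfl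
      (by rw [SimpleGraph.Walk.getVert_zero, SimpleGraph.Walk.getVert_length, h])
    omega
  have hvb_nadj : ¬ T.Adj v b := fun h => hbw (adj_eq_of_deg_one hv h hwv.symm)
  -- the pre-image tree T0 : move the edge u-b to v-b
  set T0 : SimpleGraph (Fin n) := SimpleGraph.fromRel (fun a c =>
    (T.Adj a c ∧ ¬(a = u ∧ c = b) ∧ ¬(a = b ∧ c = u)) ∨ (a = v ∧ c = b)) with hT0def
  have hT0 : ∀ a c, T0.Adj a c ↔
      ((T.Adj a c ∧ ¬(a = u ∧ c = b) ∧ ¬(c = u ∧ a = b)) ∨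
        ((a = v ∧ c = b) ∨ (c = v ∧ a = b))) := by
    intro a c
    rw [hT0def, SimpleGraph.fromRel_adj]
    constructor
    · rintro ⟨hne, (⟨h1, h2, h3⟩ | ⟨rfl, rfl⟩) | (⟨h1, h2, h3⟩ | ⟨rfl, rfl⟩)⟩
      · exact Or.inl ⟨h1, h2, fun hh => h3 ⟨hh.2, hh.1⟩⟩
      · exact Or.inr (Or.inl ⟨rfl, rfl⟩)
      · exact Or.inl ⟨h1.symm, fun hh => h3 ⟨hh.2, hh.1⟩, h2⟩
      · exact Or.inr (Or.inr ⟨rfl, rfl⟩)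
    · rintro (⟨h1, h2, h3⟩ | (⟨rfl, rfl⟩ | ⟨rfl, rfl⟩))
      · exact ⟨h1.ne, Or.inl (Or.inl ⟨h1, h2, fun hh => h3 ⟨hh.2, hh.1⟩⟩)⟩
      · exact ⟨Ne.symm hbv, Or.inl (Or.inr ⟨rfl, rfl⟩)⟩
      · exact ⟨hbv, Or.inr (Or.inr ⟨rfl, rfl⟩)⟩
  -- neighborhoods in T0
  have hNv : ∀ y, T0.Adj v y ↔ (y = w ∨ y = b) := by
    intro y
    rw [hT0]
    constructor
    · rintro (⟨h1, _, _⟩ | (⟨_, h2⟩ | ⟨h1, h2⟩))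
      · exact Or.inl (adj_eq_of_deg_one hv h1 hwv.symm)
      · exact Or.inr h2
      · exact absurd h2.symm hbv
    · rintro (rfl | rfl)
      · refine Or.inl ⟨hwv.symm, ?_, ?_⟩
        · rintro ⟨h1, _⟩; exact huv h1.symm
        · rintro ⟨_, h2⟩; exact hbv h2.symm
      · exact Or.inr (Or.inl ⟨rfl, rfl⟩)
  have hNu : ∀ y, T0.Adj u y ↔ (T.Adj u y ∧ y ≠ b) := by
    intro y
    rw [hT0]
    constructor
    · rintro (⟨h1, h2, _⟩ | (⟨h1, _⟩ | ⟨_, h2⟩))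
      · exact ⟨h1, fun hh => h2 ⟨rfl, hh⟩⟩
      · exact absurd h1 huv
      · exact absurd h2.symm hbu
    · rintro ⟨h1, h2⟩
      refine Or.inl ⟨h1, ?_, ?_⟩
      · rintro ⟨_, hh⟩; exact h2 hh
      · rintro ⟨_, hh⟩; exact hbu hh.symm
  have hNx : ∀ x, x ≠ u → x ≠ v → x ≠ b → ∀ y, (T0.Adj x y ↔ T.Adj x y) := by
    intro x hxu hxv hxb y
    rw [hT0]
    constructor
    · rintro (⟨h1, _, _⟩ | (⟨h1, _⟩ | ⟨_, h2⟩))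
      · exact h1
      · exact absurd h1 hxv
      · exact absurd h2 hxb
    · intro h1
      refine Or.inl ⟨h1, ?_, ?_⟩
      · rintro ⟨hh, _⟩; exact hxu hh
      · rintro ⟨_, hh⟩; exact hxb hh
  -- degrees in T0
  have hdegT0int : ∀ x ∈ p.support, x ≠ u → x ≠ v → deg T0 x = 2 := by
    intro x hx hxu hxv
    have hxb : x ≠ b := fun h => hbs (by rw [← h]; exact hx)
    have hset : T0.neighborSet x = T.neighborSet x :=
      Set.ext fun y => hNx x hxu hxv hxb y
    rw [deg, hset]
    exact hint x hx hxu hxv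
  have hdegT0u : deg T0 u = deg T u - 1 := by
    have hset : T0.neighborSet u = T.neighborSet u \ {b} := by
      ext y
      simp only [SimpleGraph.mem_neighborSet, Set.mem_diff, Set.mem_singleton_iff]
      exact hNu y
    rw [deg, hset,
      Set.ncard_diff_singleton_of_mem (show b ∈ T.neighborSet u from hb)]
    rfl
  have hdegT0v : deg T0 v = 2 := by
    have hset : T0.neighborSet v = {w, b} := by
      ext y
      simp only [SimpleGraph.mem_neighborSet, Set.mem_insert_iff, Set.mem_singleton_iff]
      exact hNv y
    rw [deg, hset, Set.ncard_pair (Ne.symm hbw)]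
  -- transfer the path p into T0
  have hedges : ∀ e ∈ p.edges, e ∈ T0.edgeSet := by
    intro e
    induction e using Sym2.ind with
    | _ a c =>
      intro he
      have hadj : T.Adj a c := p.adj_of_mem_edges he
      have has : a ∈ p.support := p.fst_mem_support_of_mem_edges he
      have hcs : c ∈ p.support := p.snd_mem_support_of_mem_edges he
      rw [SimpleGraph.mem_edgeSet, hT0]
      refine Or.inl ⟨hadj, ?_, ?_⟩
      · rintro ⟨_, hh⟩; exact hbs (by rw [← hh]; exact hcs)
      · rintro ⟨_, hh⟩; exact hbs (by rw [← hh]; exact has)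
  set p0 : T0.Walk u v := p.transfer T0 hedges with hp0def
  have hp0 : p0.IsPath := hp.transfer hedges
  have hsup0 : p0.support = p.support := p.support_transfer hedges
  -- T0 is connected
  have hreach : ∀ x y, T.Adj x y → T0.Reachable x y := by
    intro x y hxy
    by_cases hc : (x = u ∧ y = b) ∨ (x = b ∧ y = u)
    · have r1 : T0.Reachable u v := ⟨p0⟩
      have r2 : T0.Reachable v b := ((hNv b).mpr (Or.inr rfl)).reachable
      have r : T0.Reachable u b := r1.trans r2
      rcases hc with ⟨rfl, rfl⟩ | ⟨rfl, rfl⟩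
      · exact r
      · exact r.symm
    · push_neg at hc
      refine ((hT0 x y).mpr (Or.inl ⟨hxy, ?_, ?_⟩)).reachable
      · rintro ⟨h1, h2⟩; exact (hc.1 h1 h2).elim
      · rintro ⟨h1, h2⟩; exact (hc.2 h2 h1).elim
  have hconn : T0.Connected := by
    rw [SimpleGraph.connected_iff]
    refine ⟨?_, ⟨v⟩⟩
    intro x y
    obtain ⟨W⟩ := hT.isConnected.preconnected x y
    induction W with
    | nil => exact SimpleGraph.Reachable.refl _
    | @cons a d c h q ih => exact (hreach a d h).trans ih
  -- T0 is acyclic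
  have hacyc : T0.IsAcyclic := by
    intro x c hc
    by_cases hmem : s(v, b) ∈ c.edges
    · have hdel := (SimpleGraph.adj_and_reachable_delete_edges_iff_exists_cycle).mpr
        ⟨x, c, hc, hmem⟩
      have hle : T0 \ SimpleGraph.fromEdgeSet {s(v, b)} ≤ T \ SimpleGraph.fromEdgeSet {s(u, b)} := by
        intro a c' h
        rw [SimpleGraph.sdiff_adj, SimpleGraph.fromEdgeSet_adj] at h ⊢
        obtain ⟨h0, h1⟩ := h
        rcases (hT0 a c').mp h0 with ⟨ha1, ha2, ha3⟩ | (⟨rfl, rfl⟩ | ⟨rfl, rfl⟩)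
        · refine ⟨ha1, ?_⟩
          rintro ⟨he, _⟩
          rw [Set.mem_singleton_iff, Sym2.eq_iff] at he
          rcases he with ⟨h5, h6⟩ | ⟨h5, h6⟩
          · exact ha2 ⟨h5, h6⟩
          · exact ha3 ⟨h6, h5⟩
        · exact absurd ⟨Set.mem_singleton _, Ne.symm hbv⟩ h1
        · refine absurd ⟨?_, hbv⟩ h1
          rw [Set.mem_singleton_iff]
          exact Sym2.eq_swap
      have r1 : (T \ SimpleGraph.fromEdgeSet {s(u, b)}).Reachable v b := hdel.2.mono hle
      have hedges' : ∀ e ∈ p.edges, e ∈ (T \ SimpleGraph.fromEdgeSet {s(u, b)}).edgeSet := by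
        intro e
        induction e using Sym2.ind with
        | _ a c' =>
          intro he
          rw [SimpleGraph.mem_edgeSet, SimpleGraph.sdiff_adj, SimpleGraph.fromEdgeSet_adj]
          refine ⟨p.adj_of_mem_edges he, ?_⟩
          rintro ⟨h5, _⟩
          rw [Set.mem_singleton_iff, Sym2.eq_iff] at h5
          rcases h5 with ⟨_, h6⟩ | ⟨h6, _⟩
          · exact hbs (by rw [← h6]; exact p.snd_mem_support_of_mem_edges he)
          · exact hbs (by rw [← h6]; exact p.fst_mem_support_of_mem_edges he)
      have r2 : (T \ SimpleGraph.fromEdgeSet {s(u, b)}).Reachable u v :=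
        ⟨p.transfer _ hedges'⟩
      have r3 := r2.trans r1
      have hbridge := SimpleGraph.isAcyclic_iff_forall_adj_isBridge.mp hT.2 hb
      rw [SimpleGraph.isBridge_iff] at hbridge
      exact hbridge r3
    · have hedges'' : ∀ e ∈ c.edges, e ∈ T.edgeSet := by
        intro e
        induction e using Sym2.ind with
        | _ a c' =>
          intro he
          have h0 : T0.Adj a c' := c.edges_subset_edgeSet he
          rw [SimpleGraph.mem_edgeSet]
          rcases (hT0 a c').mp h0 with ⟨h1, _, _⟩ | (⟨rfl, rfl⟩ | ⟨rfl, rfl⟩)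
          · exact h1
          · exact absurd he hmem
          · exact absurd (Sym2.eq_swap ▸ he) hmem
      exact hT.2 _ (hc.transfer hedges'')
  -- the shift recovers T
  have hshift : shift T0 u v w = T := by
    have key : ∀ a c : Fin n,
        ((T0.Adj a c ∧ ((a ≠ v ∧ c ≠ v) ∨ (a = v ∧ c = w) ∨ (c = v ∧ a = w))) ∨
          (a = u ∧ T0.Adj v c ∧ c ≠ w)) → T.Adj a c := by
      rintro a c (⟨h0, hside⟩ | ⟨rfl, h0, hcw⟩)
      · rcases (hT0 a c).mp h0 with ⟨h1, _, _⟩ | (⟨rfl, rfl⟩ | ⟨rfl, rfl⟩)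
        · exact h1
        · rcases hside with ⟨h5, _⟩ | ⟨_, h6⟩ | ⟨h5, _⟩
          · exact absurd rfl h5
          · exact absurd h6 hbw
          · exact absurd h5 hbv
        · rcases hside with ⟨_, h5⟩ | ⟨h5, _⟩ | ⟨_, h6⟩
          · exact absurd rfl h5
          · exact absurd h5 hbv
          · exact absurd h6 hbw
      · rcases (hNv c).mp h0 with rfl | rfl
        · exact absurd rfl hcw
        · exact hb
    ext a c
    rw [shift, SimpleGraph.fromRel_adj]
    constructor
    · rintro ⟨hne, h | h⟩
      · exact key a c h
      · exact (key c a h).symm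
    · intro hadj
      refine ⟨hadj.ne, ?_⟩
      by_cases hac : a = u ∧ c = b
      · refine Or.inl (Or.inr ⟨hac.1, ?_, ?_⟩)
        · rw [hac.2]; exact (hNv b).mpr (Or.inr rfl)
        · rw [hac.2]; exact hbw
      · by_cases hca : c = u ∧ a = b
        · refine Or.inr (Or.inr ⟨hca.1, ?_, ?_⟩)
          · rw [hca.2]; exact (hNv b).mpr (Or.inr rfl)
          · rw [hca.2]; exact hbw
        · by_cases hav : a = v
          · subst hav
            have hcw : c = w := adj_eq_of_deg_one hv hadj hwv.symm
            subst hcw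
            exact Or.inl (Or.inl ⟨(hNv w).mpr (Or.inl rfl), Or.inr (Or.inl ⟨rfl, rfl⟩)⟩)
          · by_cases hcv : c = v
            · subst hcv
              have haw : a = w := adj_eq_of_deg_one hv hadj.symm hwv.symm
              subst haw
              exact Or.inl (Or.inl ⟨((hNv w).mpr (Or.inl rfl)).symm, Or.inr (Or.inr ⟨rfl, rfl⟩)⟩)
            · refine Or.inl (Or.inl ⟨(hT0 a c).mpr (Or.inl ⟨hadj, hac, ?_⟩), Or.inl ⟨hav, hcv⟩⟩)
              rintro ⟨h5, h6⟩; exact hca ⟨h5, h6⟩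
  -- assemble
  refine ⟨T0, shift T0 u v w, ⟨hconn, hacyc⟩, ⟨u, v, w, p0, huv, hp0, ?_, ?_, ?_, ?_, ?_, rfl⟩, ?_⟩
  · exact ((hNv w).mpr (Or.inl rfl)).symm
  · rw [hsup0]; exact hws
  · intro x hx hxu hxv
    rw [hsup0] at hx
    exact hdegT0int x hx hxu hxv
  · rw [hdegT0u]; omega
  · rw [hdegT0v]; omega
  · rw [hshift]
    exact ⟨SimpleGraph.Iso.refl⟩
end
end

section
/- If T₁ is obtained from a tree T by a proper generalized tree shift, then the number of pendant vertices of T₁ equals the number of pendant vertices of T plus one. -/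
open SimpleGraph Matrix BigOperators Finset

noncomputable section

/-! After the shift, `v` keeps the single neighbour `w`, so it becomes pendant, and `u` receives
the other neighbours of `v`. As `w` precedes `v` on the unique `u`–`v` path of the tree, none of
these is `u` or adjacent to `u`; so `u` loses no degree, and each of them merely trades `v` for
`u`, keeping its degree. All other degrees are untouched, and as neither `u` nor `v` was pendant,
`v` is the one new pendant vertex. -/

namespace SimpleGraph

theorem IsAcyclic.ne_and_not_adj_of_adj_end {V : Type*} {G : SimpleGraph V} {u v w b : V}
    (hG : G.IsAcyclic) {p : G.Walk u v} (hp : p.IsPath) (huv : u ≠ v) (hw : w ∈ p.support)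
    (hwv : G.Adj w v) (hvb : G.Adj v b) (hbw : b ≠ w) : b ≠ u ∧ ¬G.Adj u b := by
  have hb : b ∉ p.support := fun hb => hbw <| (hG.eq_penultimate_of_adj_end hp hvb hb).trans
    (hG.eq_penultimate_of_adj_end hp hwv.symm hw).symm
  refine ⟨fun hbu => hb (hbu ▸ p.start_mem_support), fun hub => hb ?_⟩
  exact hG.mem_support_of_ne_mem_support_of_adj_of_isPath hp (.of_adj hub) hvb
    (by simp [huv.symm, hvb.ne])

end SimpleGraph

section

variable {n : ℕ} {T : SimpleGraph (Fin n)} {u v w : Fin n}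

theorem neighborSet_shift_right (huv : u ≠ v) (hwv : T.Adj w v) :
    (shift T u v w).neighborSet v = {w} := by
  ext b
  simp only [mem_neighborSet, shift, fromRel_adj, Set.mem_singleton_iff]
  grind [T.adj_comm, SimpleGraph.irrefl]

theorem neighborSet_shift_left
    (hfresh : ∀ b, T.Adj v b → b ≠ w → b ≠ u ∧ ¬T.Adj u b) :
    (shift T u v w).neighborSet u = T.neighborSet u ∪ (T.neighborSet v \ {w}) := by
  ext b
  simp only [mem_neighborSet, shift, fromRel_adj, Set.mem_union, Set.mem_sdiff,
    Set.mem_singleton_iff]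
  grind [T.adj_comm, SimpleGraph.irrefl]

theorem neighborSet_shift_of_adj {x : Fin n} (hxu : x ≠ u) (hxv : T.Adj v x) (hxw : x ≠ w) :
    (shift T u v w).neighborSet x = insert u (T.neighborSet x \ {v}) := by
  ext b
  simp only [mem_neighborSet, shift, fromRel_adj, Set.mem_insert_iff, Set.mem_sdiff,
    Set.mem_singleton_iff]
  grind [T.adj_comm, SimpleGraph.irrefl]

theorem neighborSet_shift_of_not_adj {x : Fin n} (hxu : x ≠ u) (hxv : x ≠ v)
    (hx : T.Adj v x → x = w) :
    (shift T u v w).neighborSet x = T.neighborSet x := by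
  ext b
  simp only [mem_neighborSet, shift, fromRel_adj]
  grind [T.adj_comm, SimpleGraph.irrefl]

theorem deg_shift_right (huv : u ≠ v) (hwv : T.Adj w v) : deg (shift T u v w) v = 1 := by
  rw [deg, neighborSet_shift_right huv hwv, Set.ncard_singleton]

variable (hfresh : ∀ b, T.Adj v b → b ≠ w → b ≠ u ∧ ¬T.Adj u b)
include hfresh

theorem deg_shift_left (hwv : T.Adj w v) :
    deg (shift T u v w) u = deg T u + (deg T v - 1) := by
  have hdisj : Disjoint (T.neighborSet u) (T.neighborSet v \ {w}) :=
    Set.disjoint_left.mpr fun b hub ⟨hvb, hbw⟩ => (hfresh b hvb hbw).2 hub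
  rw [deg, neighborSet_shift_left hfresh, Set.ncard_union_eq hdisj,
    Set.ncard_sdiff_singleton_of_mem ((T.mem_neighborSet v w).mpr hwv.symm), deg, deg]

theorem deg_shift_of_ne {x : Fin n} (hxu : x ≠ u) (hxv : x ≠ v) :
    deg (shift T u v w) x = deg T x := by
  by_cases hx : T.Adj v x ∧ x ≠ w
  · have hu : u ∉ T.neighborSet x \ {v} := fun h => (hfresh x hx.1 hx.2).2 h.1.symm
    rw [deg, neighborSet_shift_of_adj hxu hx.1 hx.2, Set.ncard_insert_of_notMem hu,
      Set.ncard_sdiff_singleton_add_one ((T.mem_neighborSet x v).mpr hx.1.symm), deg]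
  · rw [deg, neighborSet_shift_of_not_adj hxu hxv (by tauto), deg]

theorem setOf_deg_shift_eq_one (huv : u ≠ v) (hwv : T.Adj w v) (hu : 2 ≤ deg T u) :
    {x | deg (shift T u v w) x = 1} = insert v {x | deg T x = 1} := by
  ext x
  simp only [Set.mem_ofPred_eq, Set.mem_insert_iff]
  by_cases hxv : x = v
  · simp [hxv, deg_shift_right huv hwv]
  by_cases hxu : x = u
  · rw [hxu, deg_shift_left hfresh hwv]
    omega
  · simp [hxv, deg_shift_of_ne hfresh hxu hxv]

theorem pendants_shift (huv : u ≠ v) (hwv : T.Adj w v) (hu : 2 ≤ deg T u) (hv : deg T v ≠ 1) :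
    pendants (shift T u v w) = pendants T + 1 := by
  rw [pendants, pendants, setOf_deg_shift_eq_one hfresh huv hwv hu]
  exact Set.ncard_insert_of_notMem hv

end

theorem stmt_8 (n : ℕ) (T T₁ : SimpleGraph (Fin n)) (hT : T.IsTree)
    (h : IsProperGTS T T₁) : pendants T₁ = pendants T + 1 := by
  obtain ⟨u, v, w, p, huv, hp, hwv, hw, -, hdu, hdv, rfl⟩ := h
  have hdu_pos : 0 < deg T u := (Set.ncard_pos).mpr ⟨_, p.adj_snd (Walk.not_nil_of_ne huv)⟩
  have hfresh : ∀ b, T.Adj v b → b ≠ w → b ≠ u ∧ ¬T.Adj u b := fun b hvb hbw =>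
    hT.isAcyclic.ne_and_not_adj_of_adj_end hp huv hw hwv hvb hbw
  exact pendants_shift hfresh huv hwv (by omega) hdv
end
end

section
/- If a tree T₁ is obtained from a tree T by a single Kelmans transformation applied to an edge uv of T, then either T₁ is isomorphic to T, or the number of pendant vertices of T₁ equals the number of pendant vertices of T plus one, and the diameter of T₁ equals diam(T) or diam(T) − 1. -/
open SimpleGraph Matrix BigOperators Finset

noncomputable section

/-!
Adjacent vertices `u`, `v` of a tree have no common neighbour, so the Kelmans transformation
contracts the edge `uv` onto `u` and re-attaches `v` as a pendant vertex at `u`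
(`collapseAddPendant`). If `v` is a leaf nothing changes, and if `u` is a leaf, swapping `u` and `v`
is an isomorphism. Otherwise `v` becomes a new leaf and no other vertex changes its status.
Distances between vertices other than `v` do not grow under the contraction, and shrink by at most
one since a path meets `u` only once. Finally `v` ends up at distance at most `d(x, u) + 1` from any
`x`, and as `u` is not a leaf, a neighbour of `u` off the path from `x` to `u` is that far from `x`
in `T`, so the diameter does not grow.
-/
namespace SimpleGraph

variable {V W : Type*} {G : SimpleGraph V} {H : SimpleGraph W}

theorem Walk.exists_length_le_of_adj_imp_eq_or_adj {f : V → W}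
    (hf : ∀ ⦃x y⦄, G.Adj x y → f x = f y ∨ H.Adj (f x) (f y)) {x y : V} (p : G.Walk x y) :
    ∃ q : H.Walk (f x) (f y), q.length ≤ p.length := by
  induction p with
  | nil => exact ⟨.nil, le_rfl⟩
  | cons h p ih =>
    obtain ⟨q, hq⟩ := ih
    rcases hf h with heq | hadj
    · exact ⟨q.copy heq.symm rfl, by simp only [Walk.length_copy, Walk.length_cons]; omega⟩
    · exact ⟨.cons hadj q, by simp only [Walk.length_cons]; omega⟩

theorem Reachable.dist_map_le_of_adj_imp_eq_or_adj {f : V → W}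
    (hf : ∀ ⦃x y⦄, G.Adj x y → f x = f y ∨ H.Adj (f x) (f y)) {x y : V} (hr : G.Reachable x y) :
    H.dist (f x) (f y) ≤ G.dist x y := by
  obtain ⟨p, hp⟩ := hr.exists_walk_length_eq_dist
  obtain ⟨q, hq⟩ := p.exists_length_le_of_adj_imp_eq_or_adj hf
  exact (dist_le q).trans (hp ▸ hq)

theorem IsTree.not_adj_of_adj_of_adj (hG : G.IsTree) {u v w : V} (huv : G.Adj u v)
    (huw : G.Adj u w) : ¬G.Adj v w := fun hvw =>
  hG.dist_ne_of_adj u hvw (by rw [dist_eq_one_iff_adj.mpr huv, dist_eq_one_iff_adj.mpr huw])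

/-- Of two neighbours of `u`, at most one lies on the path from `x` to `u`. -/
theorem IsTree.dist_lt_dist_or_dist_lt_dist (hG : G.IsTree) {u a a' : V} (ha : G.Adj u a)
    (ha' : G.Adj u a') (hne : a ≠ a') (x : V) :
    G.dist x u < G.dist x a ∨ G.dist x u < G.dist x a' := by
  classical
  obtain ⟨p, hp, -⟩ := hG.connected.exists_path_of_dist x u
  have eq_penultimate : ∀ {t}, G.Adj u t → G.dist x t ≤ G.dist x u → t = p.penultimate := by
    intro t ht hle
    obtain ⟨q, hq, hqlen⟩ := hG.connected.exists_path_of_dist x t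
    have hu : u ∉ q.support := fun hu => by
      have := q.length_takeUntil_lt_length hu ht.ne
      have := dist_le (q.takeUntil u hu)
      omega
    exact hG.isAcyclic.eq_penultimate_of_adj_end hp ht
      (hG.isAcyclic.mem_support_of_ne_mem_support_of_adj_of_isPath hp hq ht hu)
  by_contra! h
  exact hne ((eq_penultimate ha h.1).trans (eq_penultimate ha' h.2).symm)

end SimpleGraph

section Degree

variable {n : ℕ} {G : SimpleGraph (Fin n)} {u v : Fin n}

theorem neighborSet_eq_singleton_of_deg_eq_one (h : G.Adj v u) (hd : deg G v = 1) :
    G.neighborSet v = {u} := by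
  obtain ⟨w, hw⟩ := Set.ncard_eq_one.mp hd
  have hu : u ∈ ({w} : Set (Fin n)) := hw ▸ h
  rw [hw, Set.mem_singleton_iff.mp hu]

theorem exists_adj_ne_of_deg_ne_one (h : G.Adj v u) (hd : deg G v ≠ 1) :
    ∃ w, G.Adj v w ∧ w ≠ u := by
  by_contra! hne
  have : G.neighborSet v = {u} := Set.ext fun w => ⟨hne w, fun hw => hw ▸ h⟩
  exact hd (by rw [deg, this, Set.ncard_singleton])

end Degree

section Diameter

variable {n : ℕ}

theorem dist_le_gdiam (G : SimpleGraph (Fin n)) (x y : Fin n) : G.dist x y ≤ gdiam G := by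
  refine le_csSup (Set.Finite.bddAbove ?_) ⟨x, y, rfl⟩
  refine (Set.finite_range fun p : Fin n × Fin n => G.dist p.1 p.2).subset ?_
  rintro _ ⟨x, y, rfl⟩
  exact ⟨(x, y), rfl⟩

theorem gdiam_le {G : SimpleGraph (Fin n)} {d : ℕ} (h : ∀ x y, G.dist x y ≤ d) : gdiam G ≤ d :=
  csSup_le' (by rintro _ ⟨x, y, rfl⟩; exact h x y)

end Diameter

section CollapseAddPendant

variable {n : ℕ} {T : SimpleGraph (Fin n)} {a b : Fin n}

theorem kelmans_eq_collapseAddPendant (hab : T.Adj a b)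
    (hcommon : ∀ w, T.Adj a w → ¬T.Adj b w) : kelmans T a b = collapseAddPendant T a b := by
  ext x y
  simp only [kelmans, collapseAddPendant, fromRel_adj]
  have := hab.ne
  have := hcommon x
  have := hcommon y
  grind [adj_comm, SimpleGraph.irrefl]

def collapseAddPendantIsoSwap (a b : Fin n) :
    collapseAddPendant T a b ≃g collapseAddPendant T b a where
  toEquiv := Equiv.swap a b
  map_rel_iff' {x y} := by
    simp only [collapseAddPendant, fromRel_adj, Equiv.swap_apply_def]
    grind

theorem collapseAddPendant_eq_self (h : T.neighborSet b = {a}) : collapseAddPendant T a b = T := by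
  have hb : ∀ c, T.Adj b c ↔ c = a := fun c => Set.ext_iff.mp h c
  ext x y
  simp only [collapseAddPendant, fromRel_adj]
  have := hb x
  have := hb y
  grind [adj_comm, SimpleGraph.irrefl]

theorem collapseAddPendant_adj_snd_iff (hne : a ≠ b) (c : Fin n) :
    (collapseAddPendant T a b).Adj b c ↔ c = a := by
  simp only [collapseAddPendant, fromRel_adj]
  grind

theorem collapseAddPendant_adj_fst_snd (hne : a ≠ b) : (collapseAddPendant T a b).Adj a b :=
  ((collapseAddPendant_adj_snd_iff hne a).mpr rfl).symm

theorem adj_or_adj_of_collapseAddPendant_adj_fst (hab : T.Adj a b) {z : Fin n}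
    (hz : (collapseAddPendant T a b).Adj a z) : T.Adj a z ∨ T.Adj b z := by
  simp only [collapseAddPendant, fromRel_adj] at hz
  grind

theorem adj_of_collapseAddPendant_adj {x y : Fin n} (h : (collapseAddPendant T a b).Adj x y)
    (hx : x ≠ a) (hy : y ≠ a) : T.Adj x y := by
  simp only [collapseAddPendant, fromRel_adj] at h
  grind [adj_comm]

/-- `Function.update id b a` is the quotient map of the contraction of `ab` onto `a`. -/
theorem eq_or_collapseAddPendant_adj_of_adj ⦃x y : Fin n⦄ (h : T.Adj x y) :
    Function.update id b a x = Function.update id b a y ∨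
      (collapseAddPendant T a b).Adj (Function.update id b a x) (Function.update id b a y) := by
  have := h.ne
  by_cases hx : x = b <;> by_cases hy : y = b <;>
    simp only [collapseAddPendant, fromRel_adj, Function.update_apply, id, hx, hy, if_true,
      if_false] <;>
    grind [adj_comm, SimpleGraph.irrefl]

theorem neighborSet_collapseAddPendant_of_ne (hcommon : ∀ w, T.Adj a w → ¬T.Adj b w)
    {x : Fin n} (hxa : x ≠ a) (hxb : x ≠ b) :
    (collapseAddPendant T a b).neighborSet x = Function.update id b a '' T.neighborSet x := by
  ext y
  simp only [mem_neighborSet, collapseAddPendant, fromRel_adj, Set.mem_image,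
    Function.update_apply, id]
  have := hcommon x
  constructor
  · grind [adj_comm]
  · rintro ⟨c, hc, rfl⟩
    grind [adj_comm, SimpleGraph.irrefl]

theorem injOn_update_neighborSet (hcommon : ∀ w, T.Adj a w → ¬T.Adj b w) (x : Fin n) :
    Set.InjOn (Function.update id b a) (T.neighborSet x) := by
  intro c hc d hd
  simp only [mem_neighborSet, Function.update_apply, id] at *
  have := hcommon x
  grind [adj_comm]

theorem deg_collapseAddPendant_of_ne (hcommon : ∀ w, T.Adj a w → ¬T.Adj b w) {x : Fin n}
    (hxa : x ≠ a) (hxb : x ≠ b) : deg (collapseAddPendant T a b) x = deg T x := by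
  rw [deg, neighborSet_collapseAddPendant_of_ne hcommon hxa hxb,
    (injOn_update_neighborSet hcommon x).ncard_image, deg]

theorem deg_collapseAddPendant_snd (hne : a ≠ b) : deg (collapseAddPendant T a b) b = 1 := by
  have : (collapseAddPendant T a b).neighborSet b = {a} :=
    Set.ext (collapseAddPendant_adj_snd_iff hne)
  rw [deg, this, Set.ncard_singleton]

theorem deg_collapseAddPendant_fst_ne_one (hab : T.Adj a b) (hb : deg T b ≠ 1) :
    deg (collapseAddPendant T a b) a ≠ 1 := by
  obtain ⟨w, hbw, hwa⟩ := exists_adj_ne_of_deg_ne_one hab.symm hb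
  have haw : (collapseAddPendant T a b).Adj a w := by
    simpa [Function.update_of_ne hbw.ne', hwa.symm] using
      eq_or_collapseAddPendant_adj_of_adj (a := a) (b := b) hbw
  intro h
  obtain ⟨c, hc⟩ := Set.ncard_eq_one.mp h
  have hw : w ∈ (collapseAddPendant T a b).neighborSet a := haw
  have hb' : b ∈ (collapseAddPendant T a b).neighborSet a :=
    collapseAddPendant_adj_fst_snd hab.ne
  rw [hc, Set.mem_singleton_iff] at hw hb'
  exact hbw.ne' (hw.trans hb'.symm)

theorem pendants_collapseAddPendant (hab : T.Adj a b) (hcommon : ∀ w, T.Adj a w → ¬T.Adj b w)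
    (ha : deg T a ≠ 1) (hb : deg T b ≠ 1) :
    pendants (collapseAddPendant T a b) = pendants T + 1 := by
  have : {x | deg (collapseAddPendant T a b) x = 1} = insert b {x | deg T x = 1} := by
    ext x
    simp only [Set.mem_ofPred_eq, Set.mem_insert_iff]
    by_cases hxb : x = b
    · simp [hxb, deg_collapseAddPendant_snd hab.ne]
    by_cases hxa : x = a
    · subst hxa
      simp [deg_collapseAddPendant_fst_ne_one hab hb, ha, hxb]
    simp [deg_collapseAddPendant_of_ne hcommon hxa hxb, hxb]
  rw [pendants, pendants, this,
    Set.ncard_insert_of_notMem (show b ∉ {x | deg T x = 1} from hb)]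

theorem collapseAddPendant_preconnected (hT : T.Preconnected) (hne : a ≠ b) :
    (collapseAddPendant T a b).Preconnected := by
  have to_image : ∀ x, (collapseAddPendant T a b).Reachable x (Function.update id b a x) := by
    intro x
    by_cases hx : x = b
    · subst hx
      simpa using (collapseAddPendant_adj_fst_snd hne).symm.reachable
    · simp [Function.update_of_ne hx]
  intro x y
  obtain ⟨p⟩ := hT x y
  obtain ⟨q, -⟩ :=
    p.exists_length_le_of_adj_imp_eq_or_adj (eq_or_collapseAddPendant_adj_of_adj (a := a) (b := b))
  exact (to_image x).trans (q.reachable.trans (to_image y).symm)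

theorem dist_collapseAddPendant_le (hT : T.Preconnected) {x y : Fin n} (hx : x ≠ b)
    (hy : y ≠ b) : (collapseAddPendant T a b).dist x y ≤ T.dist x y := by
  simpa [Function.update_of_ne hx, Function.update_of_ne hy] using
    (hT x y).dist_map_le_of_adj_imp_eq_or_adj
      (eq_or_collapseAddPendant_adj_of_adj (a := a) (b := b))

theorem gdiam_collapseAddPendant_le (hT : T.IsTree) (hab : T.Adj a b) (ha : deg T a ≠ 1) :
    gdiam (collapseAddPendant T a b) ≤ gdiam T := by
  have hC : (collapseAddPendant T a b).Connected :=
    (connected_iff _).mpr ⟨collapseAddPendant_preconnected hT.connected.preconnected hab.ne, ⟨a⟩⟩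
  have dist_snd : ∀ x, (collapseAddPendant T a b).dist x b ≤ gdiam T := by
    intro x
    by_cases hxb : x = b
    · simp [hxb]
    obtain ⟨a', haa', ha'b⟩ := exists_adj_ne_of_deg_ne_one hab ha
    have hCab := dist_eq_one_iff_adj.mpr (collapseAddPendant_adj_fst_snd (T := T) hab.ne)
    have := hC.dist_triangle (u := x) (v := a) (w := b)
    have := dist_collapseAddPendant_le (a := a) hT.connected.preconnected hxb hab.ne
    rcases hT.dist_lt_dist_or_dist_lt_dist hab haa' ha'b.symm x with h | h
    · have := dist_le_gdiam T x b; omega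
    · have := dist_le_gdiam T x a'; omega
  refine gdiam_le fun x y => ?_
  by_cases hy : y = b
  · exact hy ▸ dist_snd x
  by_cases hx : x = b
  · rw [hx, dist_comm]
    exact dist_snd y
  exact (dist_collapseAddPendant_le hT.connected.preconnected hx hy).trans (dist_le_gdiam T x y)

theorem mem_edgeSet_of_mem_edges_of_notMem_support {x y : Fin n}
    {W : (collapseAddPendant T a b).Walk x y} (h : a ∉ W.support) :
    ∀ e ∈ W.edges, e ∈ T.edgeSet := by
  intro e he
  induction e using Sym2.ind with
  | h c d =>
    exact adj_of_collapseAddPendant_adj (W.edges_subset_edgeSet he)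
      (fun hc => h (hc ▸ W.fst_mem_support_of_mem_edges he))
      (fun hd => h (hd ▸ W.snd_mem_support_of_mem_edges he))

theorem dist_le_length_of_isPath_fst (hab : T.Adj a b) {z : Fin n}
    {W : (collapseAddPendant T a b).Walk a z} (hW : W.IsPath) :
    T.dist a z ≤ W.length ∨ T.dist b z ≤ W.length := by
  cases W with
  | nil => simp
  | cons h W =>
    rw [Walk.cons_isPath_iff] at hW
    let R := W.transfer T (mem_edgeSet_of_mem_edges_of_notMem_support hW.2)
    rcases adj_or_adj_of_collapseAddPendant_adj_fst hab h with h' | h'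
    · left
      simpa [R] using dist_le (Walk.cons h' R)
    · right
      simpa [R] using dist_le (Walk.cons h' R)

/-- A path of `collapseAddPendant T a b` passes `a` at most once, and only there can it use a
moved edge; this costs at most one detour through `b`. -/
theorem dist_le_dist_collapseAddPendant_add_one (hT : T.Connected) (hab : T.Adj a b)
    (x y : Fin n) : T.dist x y ≤ (collapseAddPendant T a b).dist x y + 1 := by
  obtain ⟨W, hW, hlen⟩ :=
    (collapseAddPendant_preconnected hT.preconnected hab.ne x y).exists_path_of_dist
  by_cases ha : a ∈ W.support
  swap
  · have := dist_le (W.transfer T (mem_edgeSet_of_mem_edges_of_notMem_support ha))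
    simp only [Walk.length_transfer] at this
    omega
  have hsplit := congrArg Walk.length (W.take_spec ha)
  rw [Walk.length_append] at hsplit
  have hx := dist_le_length_of_isPath_fst hab (hW.takeUntil ha).reverse
  have hy := dist_le_length_of_isPath_fst hab (hW.dropUntil ha)
  rw [Walk.length_reverse, dist_comm (u := a), dist_comm (u := b)] at hx
  have := hT.dist_triangle (u := x) (v := a) (w := y)
  have := hT.dist_triangle (u := x) (v := b) (w := y)
  have := hT.dist_triangle (u := a) (v := b) (w := y)
  have := hT.dist_triangle (u := b) (v := a) (w := y)
  have := dist_eq_one_iff_adj.mpr hab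
  have := dist_eq_one_iff_adj.mpr hab.symm
  omega

theorem gdiam_le_gdiam_collapseAddPendant_add_one (hT : T.Connected) (hab : T.Adj a b) :
    gdiam T ≤ gdiam (collapseAddPendant T a b) + 1 :=
  gdiam_le fun x y => (dist_le_dist_collapseAddPendant_add_one hT hab x y).trans
    (Nat.add_le_add_right (dist_le_gdiam _ x y) 1)

end CollapseAddPendant

theorem stmt_9_general (n : ℕ) (T : SimpleGraph (Fin n)) (hT : T.IsTree)
    (u v : Fin n) (huv : T.Adj u v) (T₁ : SimpleGraph (Fin n))
    (hT₁def : T₁ = kelmans T u v) :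
    Nonempty (T₁ ≃g T) ∨
      (pendants T₁ = pendants T + 1 ∧
        (gdiam T₁ = gdiam T ∨ gdiam T₁ + 1 = gdiam T)) := by
  have hcommon : ∀ w, T.Adj u w → ¬T.Adj v w := fun w => hT.not_adj_of_adj_of_adj huv
  rw [hT₁def, kelmans_eq_collapseAddPendant huv hcommon]
  by_cases hv : deg T v = 1
  · rw [collapseAddPendant_eq_self (neighborSet_eq_singleton_of_deg_eq_one huv.symm hv)]
    exact Or.inl ⟨Iso.refl⟩
  by_cases hu : deg T u = 1
  · have e := collapseAddPendantIsoSwap (T := T) u v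
    rw [collapseAddPendant_eq_self (neighborSet_eq_singleton_of_deg_eq_one huv hu)] at e
    exact Or.inl ⟨e⟩
  refine Or.inr ⟨pendants_collapseAddPendant huv hcommon hu hv, ?_⟩
  have := gdiam_collapseAddPendant_le hT huv hu
  have := gdiam_le_gdiam_collapseAddPendant_add_one hT.connected huv
  omega

theorem stmt_9 (n : ℕ) (T : SimpleGraph (Fin n)) (hT : T.IsTree)
    (u v : Fin n) (huv : T.Adj u v) (T₁ : SimpleGraph (Fin n))
    (hT₁def : T₁ = kelmans T u v) (hT₁ : T₁.IsTree) :
    Nonempty (T₁ ≃g T) ∨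
      (pendants T₁ = pendants T + 1 ∧
        (gdiam T₁ = gdiam T ∨ gdiam T₁ + 1 = gdiam T)) :=
  stmt_9_general n T hT u v huv T₁ hT₁def
end
end
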